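/- arXiv:1509.05868 — 13 statements merged into one kernel-verified Lean document; each statement's English description precedes it below -/
import Mathlib

section
/- Let A ∈ ℝ^{n×n}, B ∈ ℝ^{n×m}, C ∈ ℝ^{m×n}, D ∈ ℝ^{m×m} be such that (A,B) is reachable, (A,C) is observable, and the transfer function Q(z) = C(zI−A)⁻¹B + D is all-pass. Then A is invertible if and only if D is invertible. -/
open Matrix Filter Topology Polynomial

noncomputable section

section Helpers

variable {N : Type*} [Fintype N] [DecidableEq N] {α : Type*} {l : Filter α}

lemma det_smul_one_sub (A : Matrix N N ℝ) (z : ℝ) :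
    (z • (1 : Matrix N N ℝ) - A).det = (Matrix.charpoly A).eval z := by
  rw [Matrix.charpoly, ← Polynomial.coe_evalRingHom, RingHom.map_det]
  congr 1
  ext i j
  by_cases h : i = j <;>
    simp [h, charmatrix_apply, Matrix.diagonal_apply, Matrix.one_apply, Matrix.sub_apply,
      Matrix.smul_apply]

lemma tendsto_matrix_inv {f : α → Matrix N N ℝ} {M : Matrix N N ℝ}
    (hf : Tendsto f l (𝓝 M)) (hM : M.det ≠ 0) :
    Tendsto (fun x => (f x)⁻¹) l (𝓝 M⁻¹) := by
  have hdet : Tendsto (fun x => (f x).det) l (𝓝 M.det) :=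
    ((continuous_id.matrix_det).tendsto M).comp hf
  have hadj : Tendsto (fun x => (f x).adjugate) l (𝓝 M.adjugate) :=
    ((continuous_id.matrix_adjugate).tendsto M).comp hf
  have h := (hdet.inv₀ hM).smul hadj
  have he : (fun x => (f x)⁻¹) = fun x => ((f x).det)⁻¹ • (f x).adjugate := by
    funext x; rw [Matrix.inv_def, Ring.inverse_eq_inv]
  rw [he, Matrix.inv_def, Ring.inverse_eq_inv]
  exact h

lemma eventually_isUnit_of_tendsto {f : α → Matrix N N ℝ} {M : Matrix N N ℝ}
    (hf : Tendsto f l (𝓝 M)) (hM : M.det ≠ 0) : ∀ᶠ x in l, IsUnit (f x) := by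
  have hdet : Tendsto (fun x => (f x).det) l (𝓝 M.det) :=
    ((continuous_id.matrix_det).tendsto M).comp hf
  filter_upwards [hdet.eventually_ne hM] with x hx
  exact (Matrix.isUnit_iff_isUnit_det _).mpr (isUnit_iff_ne_zero.mpr hx)

lemma eventually_nhdsNE_not_mem {S : Set ℝ} (hS : S.Finite) :
    ∀ᶠ z in 𝓝[≠] (0:ℝ), z ∉ S := by
  have hcl : IsClosed (S \ {0}) := (hS.subset Set.diff_subset).isClosed
  have h1 : ∀ᶠ z in 𝓝 (0:ℝ), z ∈ (S \ {0})ᶜ :=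
    hcl.isOpen_compl.eventually_mem (by simp)
  have h2 : ∀ᶠ z in 𝓝[≠] (0:ℝ), z ∈ (S \ {0})ᶜ :=
    Filter.Eventually.filter_mono nhdsWithin_le_nhds h1
  have h3 : ∀ᶠ z in 𝓝[≠] (0:ℝ), z ∈ ({(0:ℝ)}ᶜ : Set ℝ) := eventually_mem_nhdsWithin
  filter_upwards [h2, h3] with z hz hz0 hmem
  exact hz ⟨hmem, hz0⟩

lemma eventually_isUnit_smul_one_sub (A : Matrix N N ℝ) :
    ∀ᶠ z in 𝓝[≠] (0:ℝ), IsUnit (z • (1 : Matrix N N ℝ) - A) := by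
  have hfin : {z : ℝ | (z • (1 : Matrix N N ℝ) - A).det = 0}.Finite := by
    apply (Polynomial.finite_setOf_isRoot (Matrix.charpoly_monic A).ne_zero).subset
    intro z hz
    simpa [Polynomial.IsRoot, ← det_smul_one_sub A z] using hz
  filter_upwards [eventually_nhdsNE_not_mem hfin] with z hz
  exact (Matrix.isUnit_iff_isUnit_det _).mpr (isUnit_iff_ne_zero.mpr (by simpa using hz))

lemma smul_one_sub_inv_eq {z : ℝ} (hz : z ≠ 0) {M : Matrix N N ℝ}
    (hM : IsUnit (1 - z • M)) :
    IsUnit (z⁻¹ • (1 : Matrix N N ℝ) - M) ∧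
      (z⁻¹ • (1 : Matrix N N ℝ) - M)⁻¹ = z • (1 - z • M)⁻¹ := by
  have key : z⁻¹ • (1 : Matrix N N ℝ) - M = z⁻¹ • (1 - z • M) := by
    rw [smul_sub, smul_smul, inv_mul_cancel₀ hz, one_smul]
  have hdet : IsUnit (1 - z • M).det := (Matrix.isUnit_iff_isUnit_det _).mp hM
  constructor
  · rw [key, Matrix.isUnit_iff_isUnit_det, Matrix.det_smul]
    exact (((isUnit_iff_ne_zero.mpr (inv_ne_zero hz)).pow _).mul hdet)
  · apply Matrix.inv_eq_right_inv
    rw [key, Matrix.smul_mul, Matrix.mul_smul, smul_smul, inv_mul_cancel₀ hz, one_smul,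
      Matrix.mul_nonsing_inv _ hdet]

lemma commute_nonsing_inv {M P : Matrix N N ℝ} (h : M * P = P * M) (hP : IsUnit P.det) :
    M * P⁻¹ = P⁻¹ * M := by
  have h1 : P⁻¹ * ((M * P) * P⁻¹) = P⁻¹ * ((P * M) * P⁻¹) := by rw [h]
  rw [mul_assoc M P P⁻¹, Matrix.mul_nonsing_inv _ hP, mul_one] at h1
  rw [mul_assoc P M P⁻¹, ← mul_assoc P⁻¹ P (M * P⁻¹), Matrix.nonsing_inv_mul _ hP, one_mul] at h1
  exact h1.symm

lemma pow_mul_smul_one_sub_inv (A : Matrix N N ℝ) {z : ℝ}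
    (h : IsUnit (z • (1 : Matrix N N ℝ) - A)) (k : ℕ) :
    A ^ k * (z • (1 : Matrix N N ℝ) - A)⁻¹ =
      z ^ k • (z • (1 : Matrix N N ℝ) - A)⁻¹
        - ∑ i ∈ Finset.range k, z ^ i • A ^ (k - 1 - i) := by
  have hc : Commute (z • (1 : Matrix N N ℝ)) A := by
    unfold Commute SemiconjBy
    rw [Matrix.smul_mul, Matrix.mul_smul, one_mul, mul_one]
  have hdet : IsUnit (z • (1 : Matrix N N ℝ) - A).det := (Matrix.isUnit_iff_isUnit_det _).mp h
  have h2 := congrArg (fun X => X * (z • (1 : Matrix N N ℝ) - A)⁻¹) (hc.geom_sum₂_mul k)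
  simp only [Finset.sum_mul, mul_assoc, Matrix.mul_nonsing_inv _ hdet, mul_one] at h2
  simp only [_root_.smul_pow, one_pow, sub_mul, Matrix.smul_mul, one_mul] at h2
  rw [h2, sub_sub_cancel]

lemma Filter.Tendsto.matrix_mul {p q r : Type*} [Fintype q]
    {f : α → Matrix p q ℝ} {g : α → Matrix q r ℝ} {M : Matrix p q ℝ} {P : Matrix q r ℝ}
    (hf : Tendsto f l (𝓝 M)) (hg : Tendsto g l (𝓝 P)) :
    Tendsto (fun x => f x * g x) l (𝓝 (M * P)) := by
  have hc : Continuous fun X : Matrix p q ℝ × Matrix q r ℝ => X.1 * X.2 :=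
    continuous_fst.matrix_mul continuous_snd
  exact (hc.tendsto (M, P)).comp (hf.prodMk_nhds hg)

lemma Filter.Tendsto.matrix_mulVec {p q : Type*} [Fintype q]
    {f : α → Matrix p q ℝ} {M : Matrix p q ℝ} (hf : Tendsto f l (𝓝 M)) (v : q → ℝ) :
    Tendsto (fun x => f x *ᵥ v) l (𝓝 (M *ᵥ v)) :=
  ((continuous_id.matrix_mulVec continuous_const).tendsto M).comp hf

end Helpers
section Defs

/-- The pair `(A,B)` is reachable: the columns of `B, AB, …, A^{N-1}B` span the state space. -/
def Reachable {N M : Type*} [Fintype N] [DecidableEq N] [Fintype M]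
    (A : Matrix N N ℝ) (B : Matrix N M ℝ) : Prop :=
  Submodule.span ℝ
    {v : N → ℝ | ∃ k < Fintype.card N, ∃ j : M, v = (A ^ k) *ᵥ (fun i => B i j)} = ⊤

/-- The pair `(A,C)` is observable: `⋂_{k<N} ker (C A^k) = {0}`. -/
def Observable {N M : Type*} [Fintype N] [DecidableEq N] [Fintype M]
    (A : Matrix N N ℝ) (C : Matrix M N ℝ) : Prop :=
  ∀ v : N → ℝ, (∀ k < Fintype.card N, (C * A ^ k) *ᵥ v = 0) → v = 0

/-- The transfer function `z ↦ C (zI - A)⁻¹ B + D` is all-pass: for every real `z ≠ 0`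
with `zI - A` and `z⁻¹I - Aᵀ` invertible,
`(C(zI−A)⁻¹B + D) (Bᵀ(z⁻¹I−Aᵀ)⁻¹Cᵀ + Dᵀ) = I`. -/
def AllPass {N M : Type*} [Fintype N] [DecidableEq N] [Fintype M] [DecidableEq M]
    (A : Matrix N N ℝ) (B : Matrix N M ℝ) (C : Matrix M N ℝ) (D : Matrix M M ℝ) : Prop :=
  ∀ z : ℝ, z ≠ 0 → IsUnit (z • (1 : Matrix N N ℝ) - A) →
    IsUnit (z⁻¹ • (1 : Matrix N N ℝ) - Aᵀ) →
    (C * (z • (1 : Matrix N N ℝ) - A)⁻¹ * B + D) *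
      (Bᵀ * (z⁻¹ • (1 : Matrix N N ℝ) - Aᵀ)⁻¹ * Cᵀ + Dᵀ) = 1

end Defs

set_option maxHeartbeats 1000000 in
theorem allpass_A_invertible_iff_D_invertible
    (n m : ℕ) (A : Matrix (Fin n) (Fin n) ℝ) (B : Matrix (Fin n) (Fin m) ℝ)
    (C : Matrix (Fin m) (Fin n) ℝ) (D : Matrix (Fin m) (Fin m) ℝ)
    (hreach : Reachable A B) (hobs : Observable A C) (hap : AllPass A B C D) :
    IsUnit A ↔ IsUnit D := by
  have hne : ∀ᶠ z in 𝓝[≠] (0:ℝ), z ≠ 0 := eventually_mem_nhdsWithin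
  constructor
  · -- A invertible → D invertible
    intro hA
    have hAdet : A.det ≠ 0 := by
      rwa [Matrix.isUnit_iff_isUnit_det, isUnit_iff_ne_zero] at hA
    have hnAT : (-Aᵀ).det ≠ 0 := by
      rw [Matrix.det_neg, Matrix.det_transpose]
      exact mul_ne_zero (pow_ne_zero _ (by norm_num)) hAdet
    have t1 : Tendsto (fun w : ℝ => (1 : Matrix (Fin n) (Fin n) ℝ) - w • A)
        (𝓝[≠] (0:ℝ)) (𝓝 1) :=
      ((continuous_const.sub (continuous_id.smul continuous_const)).tendsto' 0 1
        (by simp)).mono_left nhdsWithin_le_nhds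
    have t2 : Tendsto (fun w : ℝ => w • (1 : Matrix (Fin n) (Fin n) ℝ) - Aᵀ)
        (𝓝[≠] (0:ℝ)) (𝓝 (-Aᵀ)) :=
      (((continuous_id.smul continuous_const).sub continuous_const).tendsto' 0 (-Aᵀ)
        (by simp)).mono_left nhdsWithin_le_nhds
    have hu1 : ∀ᶠ w in 𝓝[≠] (0:ℝ), IsUnit ((1 : Matrix (Fin n) (Fin n) ℝ) - w • A) :=
      eventually_isUnit_of_tendsto t1 (by simp)
    have hu2 : ∀ᶠ w in 𝓝[≠] (0:ℝ), IsUnit (w • (1 : Matrix (Fin n) (Fin n) ℝ) - Aᵀ) :=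
      eventually_isUnit_of_tendsto t2 hnAT
    have heq : ∀ᶠ w in 𝓝[≠] (0:ℝ),
        (C * (w • ((1 : Matrix (Fin n) (Fin n) ℝ) - w • A)⁻¹) * B + D) *
          (Bᵀ * (w • (1 : Matrix (Fin n) (Fin n) ℝ) - Aᵀ)⁻¹ * Cᵀ + Dᵀ) = 1 := by
      filter_upwards [hne, hu1, hu2] with w hw0 hw1 hw2
      obtain ⟨hu, hinv⟩ := smul_one_sub_inv_eq hw0 hw1
      have h := hap w⁻¹ (inv_ne_zero hw0) hu (by rwa [inv_inv])
      rw [hinv, inv_inv] at h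
      exact h
    have i1 : Tendsto (fun w : ℝ => w • ((1 : Matrix (Fin n) (Fin n) ℝ) - w • A)⁻¹)
        (𝓝[≠] (0:ℝ)) (𝓝 0) := by
      have hi := tendsto_matrix_inv t1 (by simp)
      have hid : Tendsto (fun w : ℝ => w) (𝓝[≠] (0:ℝ)) (𝓝 0) :=
        tendsto_id.mono_left nhdsWithin_le_nhds
      simpa using hid.smul hi
    have i2 : Tendsto (fun w : ℝ => (w • (1 : Matrix (Fin n) (Fin n) ℝ) - Aᵀ)⁻¹)
        (𝓝[≠] (0:ℝ)) (𝓝 (-Aᵀ)⁻¹) := tendsto_matrix_inv t2 hnAT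
    have hlim : Tendsto (fun w : ℝ =>
        (C * (w • ((1 : Matrix (Fin n) (Fin n) ℝ) - w • A)⁻¹) * B + D) *
          (Bᵀ * (w • (1 : Matrix (Fin n) (Fin n) ℝ) - Aᵀ)⁻¹ * Cᵀ + Dᵀ))
        (𝓝[≠] (0:ℝ)) (𝓝 (D * (Bᵀ * (-Aᵀ)⁻¹ * Cᵀ + Dᵀ))) := by
      have hl : Tendsto (fun w : ℝ =>
          C * (w • ((1 : Matrix (Fin n) (Fin n) ℝ) - w • A)⁻¹) * B + D)
          (𝓝[≠] (0:ℝ)) (𝓝 (C * (0 : Matrix (Fin n) (Fin n) ℝ) * B + D)) :=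
        ((Filter.Tendsto.matrix_mul tendsto_const_nhds i1).matrix_mul
          tendsto_const_nhds).add tendsto_const_nhds
      have hr : Tendsto (fun w : ℝ =>
          Bᵀ * (w • (1 : Matrix (Fin n) (Fin n) ℝ) - Aᵀ)⁻¹ * Cᵀ + Dᵀ)
          (𝓝[≠] (0:ℝ)) (𝓝 (Bᵀ * (-Aᵀ)⁻¹ * Cᵀ + Dᵀ)) :=
        ((Filter.Tendsto.matrix_mul tendsto_const_nhds i2).matrix_mul
          tendsto_const_nhds).add tendsto_const_nhds
      simpa using hl.matrix_mul hr
    have hone : Tendsto (fun w : ℝ =>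
        (C * (w • ((1 : Matrix (Fin n) (Fin n) ℝ) - w • A)⁻¹) * B + D) *
          (Bᵀ * (w • (1 : Matrix (Fin n) (Fin n) ℝ) - Aᵀ)⁻¹ * Cᵀ + Dᵀ))
        (𝓝[≠] (0:ℝ)) (𝓝 1) :=
      Filter.Tendsto.congr' (heq.mono fun _ h => h.symm) tendsto_const_nhds
    have hDE : D * (Bᵀ * (-Aᵀ)⁻¹ * Cᵀ + Dᵀ) = 1 := tendsto_nhds_unique hlim hone
    have hdet := congrArg Matrix.det hDE
    rw [Matrix.det_mul, Matrix.det_one] at hdet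
    exact (Matrix.isUnit_iff_isUnit_det D).mpr (IsUnit.of_mul_eq_one _ hdet)
  · -- D invertible → A invertible
    intro hD
    have hDdet : D.det ≠ 0 := by
      rwa [Matrix.isUnit_iff_isUnit_det, isUnit_iff_ne_zero] at hD
    rw [Matrix.isUnit_iff_isUnit_det, isUnit_iff_ne_zero]
    intro hdet0
    obtain ⟨v, hv0, hAv⟩ := Matrix.exists_mulVec_eq_zero_iff.mpr hdet0
    have tA : Tendsto (fun z : ℝ => (1 : Matrix (Fin n) (Fin n) ℝ) - z • Aᵀ)
        (𝓝[≠] (0:ℝ)) (𝓝 1) :=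
      ((continuous_const.sub (continuous_id.smul continuous_const)).tendsto' 0 1
        (by simp)).mono_left nhdsWithin_le_nhds
    have hu1 : ∀ᶠ z in 𝓝[≠] (0:ℝ), IsUnit ((1 : Matrix (Fin n) (Fin n) ℝ) - z • Aᵀ) :=
      eventually_isUnit_of_tendsto tA (by simp)
    have huA : ∀ᶠ z in 𝓝[≠] (0:ℝ), IsUnit (z • (1 : Matrix (Fin n) (Fin n) ℝ) - A) :=
      eventually_isUnit_smul_one_sub A
    have iT : Tendsto (fun z : ℝ => z • ((1 : Matrix (Fin n) (Fin n) ℝ) - z • Aᵀ)⁻¹)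
        (𝓝[≠] (0:ℝ)) (𝓝 0) := by
      have hi := tendsto_matrix_inv tA (by simp)
      have hid : Tendsto (fun z : ℝ => z) (𝓝[≠] (0:ℝ)) (𝓝 0) :=
        tendsto_id.mono_left nhdsWithin_le_nhds
      simpa using hid.smul hi
    have hNlim : Tendsto (fun z : ℝ =>
        Bᵀ * (z • ((1 : Matrix (Fin n) (Fin n) ℝ) - z • Aᵀ)⁻¹) * Cᵀ + Dᵀ)
        (𝓝[≠] (0:ℝ)) (𝓝 Dᵀ) := by
      have h := ((Filter.Tendsto.matrix_mul (tendsto_const_nhds (x := Bᵀ)) iT).matrix_mul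
        (tendsto_const_nhds (x := Cᵀ))).add (tendsto_const_nhds (x := Dᵀ))
      simpa using h
    have hDTdet : (Dᵀ).det ≠ 0 := by rwa [Matrix.det_transpose]
    have hNunit : ∀ᶠ z in 𝓝[≠] (0:ℝ), IsUnit
        (Bᵀ * (z • ((1 : Matrix (Fin n) (Fin n) ℝ) - z • Aᵀ)⁻¹) * Cᵀ + Dᵀ) :=
      eventually_isUnit_of_tendsto hNlim hDTdet
    have heq : ∀ᶠ z in 𝓝[≠] (0:ℝ),
        C * (z • (1 : Matrix (Fin n) (Fin n) ℝ) - A)⁻¹ * B + D =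
          (Bᵀ * (z • ((1 : Matrix (Fin n) (Fin n) ℝ) - z • Aᵀ)⁻¹) * Cᵀ + Dᵀ)⁻¹ := by
      filter_upwards [hne, hu1, huA, hNunit] with z hz hz1 hzA hzN
      obtain ⟨hu, hinv⟩ := smul_one_sub_inv_eq hz hz1
      have h := hap z hz hzA hu
      rw [hinv] at h
      have hdN := (Matrix.isUnit_iff_isUnit_det _).mp hzN
      calc C * (z • (1 : Matrix (Fin n) (Fin n) ℝ) - A)⁻¹ * B + D
          = (C * (z • (1 : Matrix (Fin n) (Fin n) ℝ) - A)⁻¹ * B + D) *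
            ((Bᵀ * (z • ((1 : Matrix (Fin n) (Fin n) ℝ) - z • Aᵀ)⁻¹) * Cᵀ + Dᵀ) *
             (Bᵀ * (z • ((1 : Matrix (Fin n) (Fin n) ℝ) - z • Aᵀ)⁻¹) * Cᵀ + Dᵀ)⁻¹) := by
            rw [Matrix.mul_nonsing_inv _ hdN, mul_one]
        _ = _ := by rw [← mul_assoc, h, one_mul]
    have hFlim : Tendsto (fun z : ℝ =>
        C * (z • (1 : Matrix (Fin n) (Fin n) ℝ) - A)⁻¹ * B)
        (𝓝[≠] (0:ℝ)) (𝓝 ((Dᵀ)⁻¹ - D)) := by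
      have h1 : Tendsto (fun z : ℝ =>
          (Bᵀ * (z • ((1 : Matrix (Fin n) (Fin n) ℝ) - z • Aᵀ)⁻¹) * Cᵀ + Dᵀ)⁻¹ - D)
          (𝓝[≠] (0:ℝ)) (𝓝 ((Dᵀ)⁻¹ - D)) :=
        (tendsto_matrix_inv hNlim hDTdet).sub tendsto_const_nhds
      apply Filter.Tendsto.congr' _ h1
      filter_upwards [heq] with z hz
      rw [← hz, add_sub_cancel_right]
    have key : ∀ w ∈ Submodule.span ℝ
        {v : Fin n → ℝ | ∃ k < Fintype.card (Fin n), ∃ j : Fin m,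
          v = (A ^ k) *ᵥ (fun i => B i j)},
        Tendsto (fun z : ℝ =>
          z • ((C * (z • (1 : Matrix (Fin n) (Fin n) ℝ) - A)⁻¹) *ᵥ w))
          (𝓝[≠] (0:ℝ)) (𝓝 0) := by
      intro w hw
      induction hw using Submodule.span_induction with
      | mem x hx =>
        obtain ⟨k, hk, j, rfl⟩ := hx
        have hev : ∀ᶠ z in 𝓝[≠] (0:ℝ),
            z • ((C * (z • (1 : Matrix (Fin n) (Fin n) ℝ) - A)⁻¹) *ᵥ
              ((A ^ k) *ᵥ (fun i => B i j))) =
            z ^ (k+1) • ((C * (z • (1 : Matrix (Fin n) (Fin n) ℝ) - A)⁻¹ * B) *ᵥ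
              Pi.single j 1)
            - z • ((C * ∑ i ∈ Finset.range k,
                z ^ i • A ^ (k - 1 - i)) *ᵥ (fun i => B i j)) := by
          filter_upwards [huA] with z hz
          have hdetz := (Matrix.isUnit_iff_isUnit_det _).mp hz
          have hAH : Commute A (z • (1 : Matrix (Fin n) (Fin n) ℝ) - A)⁻¹ :=
            commute_nonsing_inv
              (by rw [mul_sub, sub_mul, Matrix.mul_smul, Matrix.smul_mul, mul_one, one_mul])
              hdetz
          have hAkH := (hAH.pow_left k).eq
          have hb : (fun i => B i j) = B *ᵥ Pi.single j 1 := by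
            simp [Matrix.mulVec_single]
            rfl
          have e1 : (C * (z • (1 : Matrix (Fin n) (Fin n) ℝ) - A)⁻¹) *ᵥ
              ((A ^ k) *ᵥ (fun i => B i j)) =
              z ^ k • ((C * (z • (1 : Matrix (Fin n) (Fin n) ℝ) - A)⁻¹ * B) *ᵥ
                Pi.single j 1)
              - (C * ∑ i ∈ Finset.range k, z ^ i • A ^ (k - 1 - i)) *ᵥ
                  (fun i => B i j) := by
            calc (C * (z • (1 : Matrix (Fin n) (Fin n) ℝ) - A)⁻¹) *ᵥ
                ((A ^ k) *ᵥ (fun i => B i j))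
                = ((C * (z • (1 : Matrix (Fin n) (Fin n) ℝ) - A)⁻¹) * A ^ k) *ᵥ
                    (fun i => B i j) := by rw [Matrix.mulVec_mulVec]
              _ = (C * (A ^ k * (z • (1 : Matrix (Fin n) (Fin n) ℝ) - A)⁻¹)) *ᵥ
                    (fun i => B i j) := by
                    rw [Matrix.mul_assoc, ← hAkH]
              _ = (C * (z ^ k • (z • (1 : Matrix (Fin n) (Fin n) ℝ) - A)⁻¹
                    - ∑ i ∈ Finset.range k, z ^ i • A ^ (k - 1 - i))) *ᵥ
                    (fun i => B i j) := by
                    rw [pow_mul_smul_one_sub_inv A hz k]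
              _ = (z ^ k • (C * (z • (1 : Matrix (Fin n) (Fin n) ℝ) - A)⁻¹)
                    - C * ∑ i ∈ Finset.range k, z ^ i • A ^ (k - 1 - i)) *ᵥ
                    (fun i => B i j) := by
                    rw [Matrix.mul_sub, Matrix.mul_smul]
              _ = z ^ k • ((C * (z • (1 : Matrix (Fin n) (Fin n) ℝ) - A)⁻¹) *ᵥ
                    (fun i => B i j))
                  - (C * ∑ i ∈ Finset.range k, z ^ i • A ^ (k - 1 - i)) *ᵥ
                    (fun i => B i j) := by
                    rw [Matrix.sub_mulVec, Matrix.smul_mulVec]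
              _ = _ := by
                    rw [show (C * (z • (1 : Matrix (Fin n) (Fin n) ℝ) - A)⁻¹) *ᵥ
                        (fun i => B i j) =
                        (C * (z • (1 : Matrix (Fin n) (Fin n) ℝ) - A)⁻¹ * B) *ᵥ
                        Pi.single j 1 from by rw [hb, Matrix.mulVec_mulVec]]
          rw [e1, smul_sub, smul_smul, ← pow_succ']
        have h1 : Tendsto (fun z : ℝ =>
            z ^ (k+1) • ((C * (z • (1 : Matrix (Fin n) (Fin n) ℝ) - A)⁻¹ * B) *ᵥ
              Pi.single j 1)) (𝓝[≠] (0:ℝ)) (𝓝 0) := by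
          have hp : Tendsto (fun z : ℝ => z ^ (k+1)) (𝓝[≠] (0:ℝ)) (𝓝 0) :=
            ((continuous_pow (k+1)).tendsto' 0 0 (by simp)).mono_left nhdsWithin_le_nhds
          have hv := hFlim.matrix_mulVec (Pi.single j 1)
          simpa using hp.smul hv
        have h2 : Tendsto (fun z : ℝ =>
            z • ((C * ∑ i ∈ Finset.range k, z ^ i • A ^ (k - 1 - i)) *ᵥ
              (fun i => B i j))) (𝓝[≠] (0:ℝ)) (𝓝 0) := by
          have hc : Continuous fun z : ℝ =>
              z • ((C * ∑ i ∈ Finset.range k, z ^ i • A ^ (k - 1 - i)) *ᵥ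
                (fun i => B i j)) :=
            continuous_id.smul ((continuous_const.matrix_mul
              (continuous_finset_sum _ fun i _ => (continuous_pow i).smul
                continuous_const)).matrix_mulVec continuous_const)
          exact ((hc.tendsto' 0 0 (by simp)).mono_left nhdsWithin_le_nhds)
        have h3 := h1.sub h2
        rw [sub_zero] at h3
        exact Filter.Tendsto.congr' (hev.mono fun _ h => h.symm) h3
      | zero =>
        simp only [Matrix.mulVec_zero, smul_zero]
        exact tendsto_const_nhds
      | add x y hx hy ihx ihy =>
        simp only [Matrix.mulVec_add, smul_add]
        simpa using ihx.add ihy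
      | smul c x hx ih =>
        have h := ih.const_smul c
        rw [smul_zero] at h
        refine h.congr fun z => ?_
        rw [Matrix.mulVec_smul, smul_comm]
    have hvmem : v ∈ Submodule.span ℝ
        {v : Fin n → ℝ | ∃ k < Fintype.card (Fin n), ∃ j : Fin m,
          v = (A ^ k) *ᵥ (fun i => B i j)} := by
      have h := hreach
      unfold Reachable at h
      rw [h]
      exact Submodule.mem_top
    have hvt := key v hvmem
    have hconst : ∀ᶠ z in 𝓝[≠] (0:ℝ),
        z • ((C * (z • (1 : Matrix (Fin n) (Fin n) ℝ) - A)⁻¹) *ᵥ v) = C *ᵥ v := by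
      filter_upwards [huA, hne] with z hz hz0
      have hdetz := (Matrix.isUnit_iff_isUnit_det _).mp hz
      have h1 : (z • (1 : Matrix (Fin n) (Fin n) ℝ) - A) *ᵥ v = z • v := by
        rw [Matrix.sub_mulVec, Matrix.smul_mulVec, Matrix.one_mulVec, hAv, sub_zero]
      have h2 : z • ((z • (1 : Matrix (Fin n) (Fin n) ℝ) - A)⁻¹ *ᵥ v) = v := by
        have h3 : (z • (1 : Matrix (Fin n) (Fin n) ℝ) - A)⁻¹ *ᵥ
            ((z • (1 : Matrix (Fin n) (Fin n) ℝ) - A) *ᵥ v) = v := by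
          rw [Matrix.mulVec_mulVec, Matrix.nonsing_inv_mul _ hdetz, Matrix.one_mulVec]
        rw [h1, Matrix.mulVec_smul] at h3
        exact h3
      rw [← Matrix.mulVec_mulVec, ← Matrix.mulVec_smul, h2]
    have hCv : C *ᵥ v = 0 :=
      tendsto_nhds_unique tendsto_const_nhds (Filter.Tendsto.congr' hconst hvt)
    have hv' : v = 0 := by
      apply hobs
      intro k hk
      cases k with
      | zero => simpa using hCv
      | succ j =>
        rw [pow_succ, ← Matrix.mul_assoc, ← Matrix.mulVec_mulVec, hAv, Matrix.mulVec_zero]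
    exact hv0 hv'
end
end

section
/- Let A ∈ ℝ^{n×n}, B ∈ ℝ^{n×m}, C ∈ ℝ^{m×n}, D ∈ ℝ^{m×m} be such that (A,B) is reachable, (A,C) is observable, and Q(z) = C(zI−A)⁻¹B + D is all-pass. If P₁ and P₂ both satisfy equations (P): A P Aᵀ − P = B Bᵀ, B Dᵀ = A P Cᵀ, D Dᵀ − C P Cᵀ = I, then P₁ = P₂. Dually, if Q₁ and Q₂ both satisfy equations (Q): Aᵀ Q A − Q = Cᵀ C, Cᵀ D = Aᵀ Q B, Dᵀ D − Bᵀ Q B = I, then Q₁ = Q₂. -/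
open Matrix

noncomputable section

lemma col_mulVec' {a b c : Type*} [Fintype b] (M : Matrix a b ℝ) (N : Matrix b c ℝ) (j : c) :
    M *ᵥ (fun i => N i j) = fun i => (M * N) i j := by
  ext i; simp [Matrix.mulVec, Matrix.mul_apply, dotProduct]

lemma mulVecLin_pow' {n : ℕ} (A : Matrix (Fin n) (Fin n) ℝ) (k : ℕ) :
    Matrix.mulVecLin (A ^ k) = (Matrix.mulVecLin A) ^ k := by
  induction k with
  | zero => simp [Matrix.mulVecLin_one]; rfl
  | succ k ih => rw [pow_succ, Matrix.mulVecLin_mul, ih, pow_succ]; rfl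

lemma ker_pow_succ' {n : ℕ} (A : Matrix (Fin n) (Fin n) ℝ) (u : Fin n → ℝ)
    (h : A *ᵥ ((A ^ n) *ᵥ u) = 0) : (A ^ n) *ᵥ u = 0 := by
  have hfin : Module.finrank ℝ (Fin n → ℝ) = n := by simp
  have key : LinearMap.ker ((Matrix.mulVecLin A) ^ (n+1)) =
      LinearMap.ker ((Matrix.mulVecLin A) ^ n) := by
    rw [Module.End.ker_pow_eq_ker_pow_finrank_of_le (by omega),
        Module.End.ker_pow_eq_ker_pow_finrank_of_le (by omega), hfin]
  have hu : u ∈ LinearMap.ker ((Matrix.mulVecLin A) ^ (n+1)) := by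
    rw [← mulVecLin_pow']
    simp only [LinearMap.mem_ker, Matrix.mulVecLin_apply]
    rw [pow_succ', ← Matrix.mulVec_mulVec]
    exact h
  rw [key, ← mulVecLin_pow'] at hu
  simpa using hu

/-- Key lemma: if `(A,C)` is observable and `Δ` satisfies the homogeneous versions of
the equations, then `Δ = 0`. -/
lemma key_delta_zero {n m : ℕ} (A : Matrix (Fin n) (Fin n) ℝ) (C : Matrix (Fin m) (Fin n) ℝ)
    (hobs : Observable A C) (Δ : Matrix (Fin n) (Fin n) ℝ)
    (h1 : A * Δ * Aᵀ = Δ) (h2 : A * (Δ * Cᵀ) = 0) (h3 : C * (Δ * Cᵀ) = 0) : Δ = 0 := by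
  -- Δ = A^k Δ (Aᵀ)^k
  have hpow : ∀ k, A ^ k * Δ * (Aᵀ) ^ k = Δ := by
    intro k
    induction k with
    | zero => simp
    | succ k ih =>
      have e : A ^ (k+1) * Δ * (Aᵀ) ^ (k+1) = A ^ k * (A * Δ * Aᵀ) * (Aᵀ) ^ k := by
        rw [pow_succ, pow_succ']
        noncomm_ring
      rw [e, h1, ih]
  -- Step A : Δ Cᵀ = 0
  have hY : Δ * Cᵀ = 0 := by
    ext i j
    have hcol : (fun i => (Δ * Cᵀ) i j) = 0 := by
      apply hobs
      intro k _
      rw [col_mulVec']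
      have hk : C * A ^ k * (Δ * Cᵀ) = 0 := by
        cases k with
        | zero => simpa using h3
        | succ k =>
          have e : C * A ^ (k+1) * (Δ * Cᵀ) = C * (A ^ k * (A * (Δ * Cᵀ))) := by
            simp only [pow_succ, Matrix.mul_assoc]
          rw [e, h2, Matrix.mul_zero, Matrix.mul_zero]
      rw [hk]
      ext i; simp
    exact congrFun hcol i
  -- Step C : Δ (Aᵀ)^l Cᵀ = 0 for all l
  have hZ : ∀ l, Δ * (Aᵀ) ^ l * Cᵀ = 0 := by
    intro l
    induction l with
    | zero => simpa using hY
    | succ l ih =>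
      have hA : A * (Δ * (Aᵀ) ^ (l+1) * Cᵀ) = 0 := by
        have e : A * (Δ * (Aᵀ) ^ (l+1) * Cᵀ) = (A * Δ * Aᵀ) * (Aᵀ) ^ l * Cᵀ := by
          simp only [pow_succ', Matrix.mul_assoc]
        rw [e, h1, ih]
      -- range: Δ (Aᵀ)^(l+1) Cᵀ = A^n * W
      set W := Δ * (Aᵀ) ^ n * ((Aᵀ) ^ (l+1) * Cᵀ) with hW
      have hrange : Δ * (Aᵀ) ^ (l+1) * Cᵀ = A ^ n * W := by
        rw [hW]
        conv_lhs => rw [← hpow n]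
        simp only [Matrix.mul_assoc]
      ext i j
      have hcol : (A ^ n) *ᵥ (fun i => W i j) = 0 := by
        apply ker_pow_succ'
        rw [col_mulVec' (A ^ n) W j, col_mulVec' A (A ^ n * W) j]
        have hz : A * (A ^ n * W) = 0 := by rw [← hrange]; exact hA
        rw [hz]
        ext i; simp
      have : (fun i => (A ^ n * W) i j) = 0 := by rw [← col_mulVec', hcol]
      calc (Δ * (Aᵀ) ^ (l+1) * Cᵀ) i j = (A ^ n * W) i j := by rw [hrange]
        _ = 0 := congrFun this i
  -- Step D : Δ = 0 by observability on rows of Δ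
  ext i j
  have hrow : (fun k => Δ i k) = 0 := by
    apply hobs
    intro l _
    have hform : Δ * (Aᵀ) ^ l * Cᵀ = ((C * A ^ l) * Δᵀ)ᵀ := by
      simp only [Matrix.transpose_mul, Matrix.transpose_transpose, Matrix.transpose_pow,
        Matrix.mul_assoc]
    have hcaz : (C * A ^ l) * Δᵀ = 0 := by
      have := hZ l
      rw [hform] at this
      calc (C * A ^ l) * Δᵀ = (((C * A ^ l) * Δᵀ)ᵀ)ᵀ := by rw [Matrix.transpose_transpose]
        _ = (0 : Matrix (Fin n) (Fin m) ℝ)ᵀ := by rw [this]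
        _ = 0 := Matrix.transpose_zero
    have : (C * A ^ l) *ᵥ (fun k => Δᵀ k i) = fun p => ((C * A ^ l) * Δᵀ) p i := col_mulVec' _ _ i
    simp only [Matrix.transpose_apply] at this
    rw [this, hcaz]
    ext p; simp
  exact congrFun hrow j

theorem allpass_P_Q_unique
    (n m : ℕ) (A : Matrix (Fin n) (Fin n) ℝ) (B : Matrix (Fin n) (Fin m) ℝ)
    (C : Matrix (Fin m) (Fin n) ℝ) (D : Matrix (Fin m) (Fin m) ℝ)
    (hreach : Reachable A B) (hobs : Observable A C) (hap : AllPass A B C D) :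
    (∀ P₁ P₂ : Matrix (Fin n) (Fin n) ℝ,
      (A * P₁ * Aᵀ - P₁ = B * Bᵀ ∧ B * Dᵀ = A * P₁ * Cᵀ ∧ D * Dᵀ - C * P₁ * Cᵀ = 1) →
      (A * P₂ * Aᵀ - P₂ = B * Bᵀ ∧ B * Dᵀ = A * P₂ * Cᵀ ∧ D * Dᵀ - C * P₂ * Cᵀ = 1) →
      P₁ = P₂) ∧
    (∀ Q₁ Q₂ : Matrix (Fin n) (Fin n) ℝ,
      (Aᵀ * Q₁ * A - Q₁ = Cᵀ * C ∧ Cᵀ * D = Aᵀ * Q₁ * B ∧ Dᵀ * D - Bᵀ * Q₁ * B = 1) →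
      (Aᵀ * Q₂ * A - Q₂ = Cᵀ * C ∧ Cᵀ * D = Aᵀ * Q₂ * B ∧ Dᵀ * D - Bᵀ * Q₂ * B = 1) →
      Q₁ = Q₂) := by
  constructor
  · rintro P₁ P₂ ⟨ha1, ha2, ha3⟩ ⟨hb1, hb2, hb3⟩
    have h1 : A * (P₁ - P₂) * Aᵀ = P₁ - P₂ := by
      have e : A * (P₁ - P₂) * Aᵀ - (P₁ - P₂) =
          (A * P₁ * Aᵀ - P₁) - (A * P₂ * Aᵀ - P₂) := by noncomm_ring
      have : A * (P₁ - P₂) * Aᵀ - (P₁ - P₂) = 0 := by rw [e, ha1, hb1, sub_self]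
      linear_combination (norm := noncomm_ring) this
    have h2 : A * ((P₁ - P₂) * Cᵀ) = 0 := by
      have e : A * ((P₁ - P₂) * Cᵀ) = A * P₁ * Cᵀ - A * P₂ * Cᵀ := by
        simp only [Matrix.sub_mul, Matrix.mul_sub, Matrix.mul_assoc]
      rw [e, ← ha2, ← hb2, sub_self]
    have h3 : C * ((P₁ - P₂) * Cᵀ) = 0 := by
      have e1 : C * P₁ * Cᵀ = D * Dᵀ - 1 := by rw [← ha3]; abel
      have e2 : C * P₂ * Cᵀ = D * Dᵀ - 1 := by rw [← hb3]; abel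
      have e : C * ((P₁ - P₂) * Cᵀ) = C * P₁ * Cᵀ - C * P₂ * Cᵀ := by
        simp only [Matrix.sub_mul, Matrix.mul_sub, Matrix.mul_assoc]
      rw [e, e1, e2, sub_self]
    have := key_delta_zero A C hobs (P₁ - P₂) h1 h2 h3
    exact sub_eq_zero.mp this
  · rintro Q₁ Q₂ ⟨ha1, ha2, ha3⟩ ⟨hb1, hb2, hb3⟩
    -- observability of (Aᵀ, Bᵀ) from reachability of (A, B)
    have hobs' : Observable Aᵀ Bᵀ := by
      intro v hv
      have hall : ∀ w ∈ {v : Fin n → ℝ |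
          ∃ k < Fintype.card (Fin n), ∃ j : Fin m, v = (A ^ k) *ᵥ (fun i => B i j)},
          w ⬝ᵥ v = 0 := by
        rintro w ⟨k, hk, j, rfl⟩
        have hvk := hv k (by simpa using hk)
        have hform : Bᵀ * (Aᵀ) ^ k = (A ^ k * B)ᵀ := by
          rw [Matrix.transpose_mul, Matrix.transpose_pow]
        have : ((A ^ k * B)ᵀ *ᵥ v) j = 0 := by rw [← hform, hvk]; rfl
        rw [col_mulVec']
        calc (fun i => (A ^ k * B) i j) ⬝ᵥ v = ((A ^ k * B)ᵀ *ᵥ v) j := by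
              simp [Matrix.mulVec, dotProduct, Matrix.transpose_apply]
          _ = 0 := this
      have hspan : ∀ w ∈ Submodule.span ℝ {v : Fin n → ℝ |
          ∃ k < Fintype.card (Fin n), ∃ j : Fin m, v = (A ^ k) *ᵥ (fun i => B i j)},
          w ⬝ᵥ v = 0 := by
        intro w hw
        induction hw using Submodule.span_induction with
        | mem x hx => exact hall x hx
        | zero => simp
        | add x y _ _ hx hy => rw [add_dotProduct, hx, hy, add_zero]
        | smul a x _ hx => rw [smul_dotProduct, hx, smul_zero]
      have hvv : v ⬝ᵥ v = 0 := hspan v (by rw [hreach]; trivial)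
      exact dotProduct_self_eq_zero.mp hvv
    have h1 : Aᵀ * (Q₁ - Q₂) * (Aᵀ)ᵀ = Q₁ - Q₂ := by
      rw [Matrix.transpose_transpose]
      have e : Aᵀ * (Q₁ - Q₂) * A - (Q₁ - Q₂) =
          (Aᵀ * Q₁ * A - Q₁) - (Aᵀ * Q₂ * A - Q₂) := by noncomm_ring
      have : Aᵀ * (Q₁ - Q₂) * A - (Q₁ - Q₂) = 0 := by rw [e, ha1, hb1, sub_self]
      linear_combination (norm := noncomm_ring) this
    have h2 : Aᵀ * ((Q₁ - Q₂) * (Bᵀ)ᵀ) = 0 := by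
      rw [Matrix.transpose_transpose]
      have e : Aᵀ * ((Q₁ - Q₂) * B) = Aᵀ * Q₁ * B - Aᵀ * Q₂ * B := by
        simp only [Matrix.sub_mul, Matrix.mul_sub, Matrix.mul_assoc]
      rw [e, ← ha2, ← hb2, sub_self]
    have h3 : Bᵀ * ((Q₁ - Q₂) * (Bᵀ)ᵀ) = 0 := by
      rw [Matrix.transpose_transpose]
      have e1 : Bᵀ * Q₁ * B = Dᵀ * D - 1 := by rw [← ha3]; abel
      have e2 : Bᵀ * Q₂ * B = Dᵀ * D - 1 := by rw [← hb3]; abel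
      have e : Bᵀ * ((Q₁ - Q₂) * B) = Bᵀ * Q₁ * B - Bᵀ * Q₂ * B := by
        simp only [Matrix.sub_mul, Matrix.mul_sub, Matrix.mul_assoc]
      rw [e, e1, e2, sub_self]
    have := key_delta_zero Aᵀ Bᵀ hobs' (Q₁ - Q₂) h1 h2 h3
    exact sub_eq_zero.mp this
end
end

section
/- Let A ∈ ℝ^{n×n}, B ∈ ℝ^{n×m}, C ∈ ℝ^{m×n}, D ∈ ℝ^{m×m} be arbitrary (no reachability or observability is assumed). If there exists a symmetric matrix P ∈ ℝ^{n×n} satisfying A P Aᵀ − P = B Bᵀ, B Dᵀ = A P Cᵀ, and D Dᵀ − C P Cᵀ = I, then the transfer function Q(z) = C(zI−A)⁻¹B + D is all-pass. -/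
open Matrix

noncomputable section

theorem eqsP_implies_allpass
    (n m : ℕ) (A : Matrix (Fin n) (Fin n) ℝ) (B : Matrix (Fin n) (Fin m) ℝ)
    (C : Matrix (Fin m) (Fin n) ℝ) (D : Matrix (Fin m) (Fin m) ℝ)
    (P : Matrix (Fin n) (Fin n) ℝ) (hPsymm : P.IsSymm)
    (h1 : A * P * Aᵀ - P = B * Bᵀ) (h2 : B * Dᵀ = A * P * Cᵀ)
    (h3 : D * Dᵀ - C * P * Cᵀ = 1) :
    AllPass A B C D := by
  intro z hz hFu hGu
  set F := z • (1 : Matrix (Fin n) (Fin n) ℝ) - A with hFdef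
  set G := z⁻¹ • (1 : Matrix (Fin n) (Fin n) ℝ) - Aᵀ with hGdef
  clear_value F G
  have hFi : F⁻¹ * F = 1 := Matrix.nonsing_inv_mul _ ((Matrix.isUnit_iff_isUnit_det F).mp hFu)
  have hGi : G * G⁻¹ = 1 := Matrix.mul_nonsing_inv _ ((Matrix.isUnit_iff_isUnit_det G).mp hGu)
  have cF : ∀ (X : Matrix (Fin n) (Fin m) ℝ), F⁻¹ * (F * X) = X := fun X => by
    rw [← Matrix.mul_assoc, hFi, Matrix.one_mul]
  have cG : ∀ (X : Matrix (Fin n) (Fin m) ℝ), G * (G⁻¹ * X) = X := fun X => by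
    rw [← Matrix.mul_assoc, hGi, Matrix.one_mul]
  have hDB : D * Bᵀ = C * P * Aᵀ := by
    calc D * Bᵀ = (B * Dᵀ)ᵀ := by simp
    _ = (A * P * Cᵀ)ᵀ := by rw [h2]
    _ = C * P * Aᵀ := by simp [Matrix.transpose_mul, hPsymm.eq, Matrix.mul_assoc]
  have hBB : B * Bᵀ = -(F * (P * G)) - F * (P * Aᵀ) - A * (P * G) := by
    rw [← h1, hFdef, hGdef]
    simp only [Matrix.sub_mul, Matrix.mul_sub, Matrix.smul_mul, Matrix.mul_smul,
      smul_smul, Matrix.one_mul, Matrix.mul_one, smul_sub, smul_add, smul_neg,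
      mul_inv_cancel₀ hz, inv_mul_cancel₀ hz, one_smul, Matrix.mul_assoc]
    abel
  have k1 : B * (Bᵀ * (G⁻¹ * Cᵀ)) =
      -(F * (P * Cᵀ)) - F * (P * (Aᵀ * (G⁻¹ * Cᵀ))) - A * (P * Cᵀ) := by
    have h := congrArg (fun X => X * (G⁻¹ * Cᵀ)) hBB
    simp only [Matrix.sub_mul, Matrix.neg_mul, Matrix.mul_assoc] at h
    rw [h, cG]
  have t1 : C * F⁻¹ * B * (Bᵀ * G⁻¹ * Cᵀ) =
      -(C * (P * Cᵀ)) - C * (P * (Aᵀ * (G⁻¹ * Cᵀ))) - C * (F⁻¹ * (A * (P * Cᵀ))) := by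
    simp only [Matrix.mul_assoc]
    rw [k1]
    simp only [Matrix.mul_sub, Matrix.mul_neg]
    rw [cF (P * Cᵀ), cF (P * (Aᵀ * (G⁻¹ * Cᵀ)))]
  have t2 : C * F⁻¹ * B * Dᵀ = C * (F⁻¹ * (A * (P * Cᵀ))) := by
    simp only [Matrix.mul_assoc]
    rw [show B * Dᵀ = A * (P * Cᵀ) by rw [h2, Matrix.mul_assoc]]
  have t3 : D * (Bᵀ * G⁻¹ * Cᵀ) = C * (P * (Aᵀ * (G⁻¹ * Cᵀ))) := by
    calc D * (Bᵀ * G⁻¹ * Cᵀ) = D * Bᵀ * (G⁻¹ * Cᵀ) := by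
          simp only [Matrix.mul_assoc]
      _ = C * (P * (Aᵀ * (G⁻¹ * Cᵀ))) := by rw [hDB]; simp only [Matrix.mul_assoc]
  calc (C * F⁻¹ * B + D) * (Bᵀ * G⁻¹ * Cᵀ + Dᵀ)
      = C * F⁻¹ * B * (Bᵀ * G⁻¹ * Cᵀ) + C * F⁻¹ * B * Dᵀ
        + D * (Bᵀ * G⁻¹ * Cᵀ) + D * Dᵀ := by
        simp only [Matrix.add_mul, Matrix.mul_add]; abel
    _ = (-(C * (P * Cᵀ)) - C * (P * (Aᵀ * (G⁻¹ * Cᵀ))) - C * (F⁻¹ * (A * (P * Cᵀ))))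
        + C * (F⁻¹ * (A * (P * Cᵀ))) + C * (P * (Aᵀ * (G⁻¹ * Cᵀ))) + D * Dᵀ := by
        rw [t1, t2, t3]
    _ = D * Dᵀ - C * (P * Cᵀ) := by abel
    _ = 1 := by rw [← Matrix.mul_assoc]; exact h3
end
end

section
/- Let A ∈ ℝ^{n×n}, B ∈ ℝ^{n×m}, C ∈ ℝ^{m×n}, D ∈ ℝ^{m×m} be arbitrary (no reachability or observability is assumed). If there exists a symmetric matrix Q ∈ ℝ^{n×n} satisfying Aᵀ Q A − Q = Cᵀ C, Cᵀ D = Aᵀ Q B, and Dᵀ D − Bᵀ Q B = I, then the transfer function Q(z) = C(zI−A)⁻¹B + D is all-pass. -/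
open Matrix

noncomputable section

theorem eqsQ_implies_allpass
    (n m : ℕ) (A : Matrix (Fin n) (Fin n) ℝ) (B : Matrix (Fin n) (Fin m) ℝ)
    (C : Matrix (Fin m) (Fin n) ℝ) (D : Matrix (Fin m) (Fin m) ℝ)
    (Q : Matrix (Fin n) (Fin n) ℝ) (hQsymm : Q.IsSymm)
    (h1 : Aᵀ * Q * A - Q = Cᵀ * C) (h2 : Cᵀ * D = Aᵀ * Q * B)
    (h3 : Dᵀ * D - Bᵀ * Q * B = 1) :
    AllPass A B C D := by
  intro z hz hF hG
  set F : Matrix (Fin n) (Fin n) ℝ := z • 1 - A with hFdef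
  set G : Matrix (Fin n) (Fin n) ℝ := z⁻¹ • 1 - Aᵀ with hGdef
  have hFdet : IsUnit F.det := (Matrix.isUnit_iff_isUnit_det F).mp hF
  have hGdet : IsUnit G.det := (Matrix.isUnit_iff_isUnit_det G).mp hG
  have hFF : F * F⁻¹ = 1 := Matrix.mul_nonsing_inv F hFdet
  have hGG : G⁻¹ * G = 1 := Matrix.nonsing_inv_mul G hGdet
  rw [mul_eq_one_comm]
  -- key identity: CᵀC = -(AᵀQ)F - z • (G Q)
  have hCtC : Cᵀ * C = -((Aᵀ * Q) * F) - z • (G * Q) := by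
    rw [← h1, hFdef, hGdef]
    simp [Matrix.mul_sub, Matrix.sub_mul, Matrix.mul_smul, Matrix.smul_mul,
      smul_smul, mul_inv_cancel₀ hz, inv_mul_cancel₀ hz]
    match_scalars <;> field_simp <;> ring
  have hDtC : Dᵀ * C = Bᵀ * Q * A := by
    have := congrArg Matrix.transpose h2
    simpa [Matrix.transpose_mul, Matrix.mul_assoc, hQsymm.eq] using this
  have hAF : A * F⁻¹ = z • F⁻¹ - 1 := by
    have : A = z • (1 : Matrix (Fin n) (Fin n) ℝ) - F := by rw [hFdef]; abel
    rw [this, Matrix.sub_mul, Matrix.smul_mul, Matrix.one_mul, hFF]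
  -- term 1
  have t1 : Bᵀ * G⁻¹ * Cᵀ * (C * F⁻¹ * B)
      = -(Bᵀ * G⁻¹ * (Aᵀ * Q) * B) - z • (Bᵀ * Q * F⁻¹ * B) := by
    have e : G⁻¹ * (Cᵀ * C) * F⁻¹ = -(G⁻¹ * (Aᵀ * Q)) - z • (Q * F⁻¹) := by
      rw [hCtC, Matrix.mul_sub, Matrix.sub_mul, Matrix.mul_neg, Matrix.neg_mul,
        Matrix.mul_smul, Matrix.smul_mul]
      simp only [Matrix.mul_assoc]
      rw [hFF, Matrix.mul_one, ← Matrix.mul_assoc G⁻¹ G, hGG, Matrix.one_mul]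
    calc Bᵀ * G⁻¹ * Cᵀ * (C * F⁻¹ * B)
        = Bᵀ * (G⁻¹ * (Cᵀ * C) * F⁻¹) * B := by
          simp only [Matrix.mul_assoc]
      _ = -(Bᵀ * G⁻¹ * (Aᵀ * Q) * B) - z • (Bᵀ * Q * F⁻¹ * B) := by
          rw [e]
          simp only [Matrix.mul_sub, Matrix.sub_mul, Matrix.mul_neg, Matrix.neg_mul,
            Matrix.mul_smul, Matrix.smul_mul, Matrix.mul_assoc]
  have t2 : Bᵀ * G⁻¹ * Cᵀ * D = Bᵀ * G⁻¹ * (Aᵀ * Q) * B := by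
    simp only [Matrix.mul_assoc, h2]
  have t3 : Dᵀ * (C * F⁻¹ * B) = z • (Bᵀ * Q * F⁻¹ * B) - Bᵀ * Q * B := by
    calc Dᵀ * (C * F⁻¹ * B) = (Dᵀ * C) * F⁻¹ * B := by simp only [Matrix.mul_assoc]
      _ = Bᵀ * Q * (A * F⁻¹) * B := by rw [hDtC]; simp only [Matrix.mul_assoc]
      _ = z • (Bᵀ * Q * F⁻¹ * B) - Bᵀ * Q * B := by
          rw [hAF, Matrix.mul_sub, Matrix.sub_mul, Matrix.mul_smul, Matrix.smul_mul,
            Matrix.mul_one]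
  rw [Matrix.add_mul, Matrix.mul_add, Matrix.mul_add, t1, t2, t3]
  rw [← h3]
  abel
end
end

section
/- Let A ∈ ℝ^{n×n}, B ∈ ℝ^{n×m}, C ∈ ℝ^{m×n}, D ∈ ℝ^{m×m} and let P ∈ ℝ^{n×n} be symmetric and invertible. Then P satisfies equations (P): A P Aᵀ − P = B Bᵀ, B Dᵀ = A P Cᵀ, D Dᵀ − C P Cᵀ = I, if and only if P⁻¹ satisfies equations (Q): Aᵀ (P⁻¹) A − P⁻¹ = Cᵀ C, Cᵀ D = Aᵀ (P⁻¹) B, Dᵀ D − Bᵀ (P⁻¹) B = I. -/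
open Matrix

noncomputable section

lemma key {N M : Type*} [Fintype N] [DecidableEq N] [Fintype M] [DecidableEq M]
    (A : Matrix N N ℝ) (B : Matrix N M ℝ) (C : Matrix M N ℝ) (D : Matrix M M ℝ)
    (P : Matrix N N ℝ) (hPsymm : P.IsSymm) (hPinv : IsUnit P)
    (h1 : A * P * Aᵀ - P = B * Bᵀ) (h2 : B * Dᵀ = A * P * Cᵀ)
    (h3 : D * Dᵀ - C * P * Cᵀ = 1) :
    Aᵀ * P⁻¹ * A - P⁻¹ = Cᵀ * C ∧ Cᵀ * D = Aᵀ * P⁻¹ * B ∧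
      Dᵀ * D - Bᵀ * P⁻¹ * B = 1 := by
  have hPdet : IsUnit P.det := (isUnit_iff_isUnit_det P).mp hPinv
  set Mm : Matrix (N ⊕ M) (N ⊕ M) ℝ := fromBlocks A B C D with hMm
  set J : Matrix (N ⊕ M) (N ⊕ M) ℝ := fromBlocks P 0 0 (-1) with hJdef
  have hPt : Pᵀ = P := hPsymm
  have e21 : C * P * Aᵀ = D * Bᵀ := by
    have := congrArg Matrix.transpose h2
    simp only [Matrix.transpose_mul, Matrix.transpose_transpose, hPt] at this
    rw [this, Matrix.mul_assoc]
  -- equations (P) as a block identity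
  have hJ : Mm * J * Mmᵀ = J := by
    rw [hMm, hJdef, fromBlocks_transpose, fromBlocks_multiply, fromBlocks_multiply]
    rw [sub_eq_iff_eq_add] at h1 h3
    refine fromBlocks_inj.mpr ⟨?_, ?_, ?_, ?_⟩ <;>
      simp only [Matrix.mul_zero, add_zero, zero_add, Matrix.mul_neg, Matrix.mul_one,
        Matrix.neg_mul]
    · rw [h1]; abel
    · rw [← h2]; abel
    · rw [e21]; abel
    · rw [h3]; abel
  -- J is invertible with inverse fromBlocks P⁻¹ 0 0 (-1)
  have hJinv : J * fromBlocks P⁻¹ 0 0 (-1) = 1 := by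
    rw [hJdef, fromBlocks_multiply]
    simp [Matrix.mul_nonsing_inv P hPdet, ← fromBlocks_one]
  have hJdetu : IsUnit J.det := by
    have h' : J.det * (fromBlocks P⁻¹ 0 0 (-1) : Matrix (N ⊕ M) (N ⊕ M) ℝ).det = 1 := by
      rw [← det_mul, hJinv, det_one]
    exact IsUnit.of_mul_eq_one _ h'
  have hJi : J⁻¹ = fromBlocks P⁻¹ 0 0 (-1) := inv_eq_right_inv hJinv
  -- M is invertible
  have hMdet : IsUnit Mm.det := by
    have hd := congrArg Matrix.det hJ
    rw [det_mul, det_mul, det_transpose] at hd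
    have h0 : J.det ≠ 0 := hJdetu.ne_zero
    have : Mm.det * Mm.det = 1 := by
      apply mul_right_cancel₀ h0
      linear_combination hd
    exact IsUnit.of_mul_eq_one _ this
  -- derive the dual identity
  have hdual : Mmᵀ * J⁻¹ * Mm = J⁻¹ := by
    have hl : Mm⁻¹ * Mm = 1 := nonsing_inv_mul _ hMdet
    have hr : Mmᵀ * Mmᵀ⁻¹ = 1 := by
      rw [← transpose_nonsing_inv, ← transpose_mul, hl, transpose_one]
    have hk : J⁻¹ = Mmᵀ⁻¹ * J⁻¹ * Mm⁻¹ := by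
      conv_lhs => rw [← hJ]
      rw [Matrix.mul_inv_rev, Matrix.mul_inv_rev]
      noncomm_ring
    calc Mmᵀ * J⁻¹ * Mm = (Mmᵀ * Mmᵀ⁻¹) * J⁻¹ * (Mm⁻¹ * Mm) := by
          conv_lhs => rw [hk]
          noncomm_ring
      _ = J⁻¹ := by rw [hl, hr, Matrix.one_mul, Matrix.mul_one]
  rw [hJi, hMm, fromBlocks_transpose, fromBlocks_multiply, fromBlocks_multiply] at hdual
  obtain ⟨e11, e12, -, e22⟩ := fromBlocks_inj.mp hdual
  simp only [Matrix.mul_zero, add_zero, zero_add, Matrix.mul_neg, Matrix.mul_one,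
    Matrix.neg_mul] at e11 e12 e22
  refine ⟨?_, ?_, ?_⟩
  · have h' : Aᵀ * P⁻¹ * A - P⁻¹ = (Aᵀ * P⁻¹ * A + -(Cᵀ * C)) + Cᵀ * C - P⁻¹ := by abel
    rw [h', e11]; abel
  · rw [← sub_eq_add_neg] at e12
    exact (sub_eq_zero.mp e12).symm
  · have h' : Dᵀ * D - Bᵀ * P⁻¹ * B = -(Bᵀ * P⁻¹ * B + -(Dᵀ * D)) := by abel
    rw [h', e22, neg_neg]

theorem eqsP_iff_eqsQ_inverse
    (n m : ℕ) (A : Matrix (Fin n) (Fin n) ℝ) (B : Matrix (Fin n) (Fin m) ℝ)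
    (C : Matrix (Fin m) (Fin n) ℝ) (D : Matrix (Fin m) (Fin m) ℝ)
    (P : Matrix (Fin n) (Fin n) ℝ) (hPsymm : P.IsSymm) (hPinv : IsUnit P) :
    (A * P * Aᵀ - P = B * Bᵀ ∧ B * Dᵀ = A * P * Cᵀ ∧ D * Dᵀ - C * P * Cᵀ = 1) ↔
    (Aᵀ * P⁻¹ * A - P⁻¹ = Cᵀ * C ∧ Cᵀ * D = Aᵀ * P⁻¹ * B ∧
      Dᵀ * D - Bᵀ * P⁻¹ * B = 1) := by
  have hPdet : IsUnit P.det := (isUnit_iff_isUnit_det P).mp hPinv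
  have hPi : P⁻¹⁻¹ = P := nonsing_inv_nonsing_inv P hPdet
  have hPisymm : (P⁻¹).IsSymm := by
    unfold Matrix.IsSymm
    rw [transpose_nonsing_inv, hPsymm]
  have hPiinv : IsUnit P⁻¹ := by
    rw [isUnit_iff_isUnit_det, det_nonsing_inv]
    exact isUnit_ringInverse.mpr hPdet
  constructor
  · rintro ⟨h1, h2, h3⟩
    exact key A B C D P hPsymm hPinv h1 h2 h3
  · rintro ⟨h1, h2, h3⟩
    have h := key Aᵀ Cᵀ Bᵀ Dᵀ P⁻¹ hPisymm hPiinv (by simpa using h1) (by simpa using h2)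
      (by simpa using h3)
    simpa [hPi] using h
end
end

section
/- Let A ∈ ℝ^{n×n}, B ∈ ℝ^{n×m}, C ∈ ℝ^{m×n} be given. (i) If P ∈ ℝ^{n×n} is symmetric, G ∈ ℝ^{n×m}, L ∈ ℝ^{m×m} and M(P) = [[A P Aᵀ − P, A P Cᵀ],[C P Aᵀ, C P Cᵀ + I]] equals the block matrix [[G Gᵀ, G Lᵀ],[L Gᵀ, L Lᵀ]], then the transfer function Q_L(z) = C(zI−A)⁻¹G + L is all-pass. (ii) Dually, if Q ∈ ℝ^{n×n} is symmetric, H ∈ ℝ^{m×n}, J ∈ ℝ^{m×m} and N(Q) = [[Aᵀ Q A − Q, Aᵀ Q B],[Bᵀ Q A, Bᵀ Q B + I]] equals [[Hᵀ H, Hᵀ J],[Jᵀ H, Jᵀ J]], then the transfer function Q_R(z) = H(zI−A)⁻¹B + J is all-pass. -/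
open Matrix

noncomputable section

set_option maxHeartbeats 1000000 in
lemma allpass_of_blocks {N M : Type*} [Fintype N] [DecidableEq N] [Fintype M] [DecidableEq M]
    (A : Matrix N N ℝ) (C : Matrix M N ℝ) (P : Matrix N N ℝ)
    (G : Matrix N M ℝ) (L : Matrix M M ℝ)
    (h11 : A * P * Aᵀ - P = G * Gᵀ) (h12 : A * P * Cᵀ = G * Lᵀ)
    (h21 : C * P * Aᵀ = L * Gᵀ) (h22 : C * P * Cᵀ + 1 = L * Lᵀ) :
    AllPass A G C L := by
  intro z hz hX hY
  set U := (z • (1 : Matrix N N ℝ) - A)⁻¹ with hU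
  set V := (z⁻¹ • (1 : Matrix N N ℝ) - Aᵀ)⁻¹ with hV
  have hUX : U * (z • (1 : Matrix N N ℝ) - A) = 1 :=
    Matrix.nonsing_inv_mul _ ((Matrix.isUnit_iff_isUnit_det _).mp hX)
  have hYV : (z⁻¹ • (1 : Matrix N N ℝ) - Aᵀ) * V = 1 :=
    Matrix.mul_nonsing_inv _ ((Matrix.isUnit_iff_isUnit_det _).mp hY)
  have hUA : U * A = z • U - 1 := by
    rw [Matrix.mul_sub, Matrix.mul_smul, mul_one] at hUX
    rw [eq_sub_iff_add_eq, ← hUX]; abel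
  have hAV : Aᵀ * V = z⁻¹ • V - 1 := by
    rw [Matrix.sub_mul, Matrix.smul_mul, one_mul] at hYV
    rw [eq_sub_iff_add_eq, ← hYV]; abel
  have hmid : U * (A * P * Aᵀ - P) * V + U * (A * P) + P * Aᵀ * V + P = 0 := by
    have e1 : U * (A * P * Aᵀ - P) * V = (U * A) * P * (Aᵀ * V) - U * (P * V) := by
      simp only [Matrix.sub_mul, Matrix.mul_sub, mul_assoc]
    have e2 : U * (A * P) = (U * A) * P := by rw [mul_assoc]
    have e3 : P * Aᵀ * V = P * (Aᵀ * V) := by rw [mul_assoc]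
    rw [e1, e2, e3, hUA, hAV]
    simp only [Matrix.sub_mul, Matrix.mul_sub, Matrix.smul_mul, Matrix.mul_smul,
      smul_sub, smul_smul, mul_inv_cancel₀ hz, inv_mul_cancel₀ hz, one_smul,
      one_mul, mul_one, smul_add, mul_assoc]
    abel
  have expand : (C * U * G + L) * (Gᵀ * V * Cᵀ + Lᵀ)
      = C * U * (G * Gᵀ) * V * Cᵀ + C * U * (G * Lᵀ) + (L * Gᵀ) * V * Cᵀ + L * Lᵀ := by
    simp only [Matrix.add_mul, Matrix.mul_add, Matrix.mul_assoc]
    abel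
  rw [expand, ← h11, ← h12, ← h21, ← h22]
  have reassoc : C * U * (A * P * Aᵀ - P) * V * Cᵀ + C * U * (A * P * Cᵀ)
      + C * P * Aᵀ * V * Cᵀ + (C * P * Cᵀ + 1)
      = C * (U * (A * P * Aᵀ - P) * V + U * (A * P) + P * Aᵀ * V + P) * Cᵀ + 1 := by
    simp only [sub_eq_add_neg, Matrix.add_mul, Matrix.mul_add, Matrix.neg_mul,
      Matrix.mul_neg, Matrix.mul_assoc]
    abel
  rw [reassoc, hmid]
  simp

theorem LMI_factor_allpass
    (n m : ℕ) (A : Matrix (Fin n) (Fin n) ℝ) (B : Matrix (Fin n) (Fin m) ℝ)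
    (C : Matrix (Fin m) (Fin n) ℝ) :
    (∀ (P : Matrix (Fin n) (Fin n) ℝ), P.IsSymm →
      ∀ (G : Matrix (Fin n) (Fin m) ℝ) (L : Matrix (Fin m) (Fin m) ℝ),
        Matrix.fromBlocks (A * P * Aᵀ - P) (A * P * Cᵀ) (C * P * Aᵀ) (C * P * Cᵀ + 1) =
          Matrix.fromBlocks (G * Gᵀ) (G * Lᵀ) (L * Gᵀ) (L * Lᵀ) →
        AllPass A G C L) ∧
    (∀ (Q : Matrix (Fin n) (Fin n) ℝ), Q.IsSymm →
      ∀ (H : Matrix (Fin m) (Fin n) ℝ) (J : Matrix (Fin m) (Fin m) ℝ),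
        Matrix.fromBlocks (Aᵀ * Q * A - Q) (Aᵀ * Q * B) (Bᵀ * Q * A) (Bᵀ * Q * B + 1) =
          Matrix.fromBlocks (Hᵀ * H) (Hᵀ * J) (Jᵀ * H) (Jᵀ * J) →
        AllPass A B H J) := by
  constructor
  · intro P _hP G L h
    have h11 := congrArg Matrix.toBlocks₁₁ h
    have h12 := congrArg Matrix.toBlocks₁₂ h
    have h21 := congrArg Matrix.toBlocks₂₁ h
    have h22 := congrArg Matrix.toBlocks₂₂ h
    simp only [Matrix.toBlocks_fromBlocks₁₁, Matrix.toBlocks_fromBlocks₁₂,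
      Matrix.toBlocks_fromBlocks₂₁, Matrix.toBlocks_fromBlocks₂₂] at h11 h12 h21 h22
    exact allpass_of_blocks A C P G L h11 h12 h21 h22
  · intro Q _hQ H J h
    have h11 := congrArg Matrix.toBlocks₁₁ h
    have h12 := congrArg Matrix.toBlocks₁₂ h
    have h21 := congrArg Matrix.toBlocks₂₁ h
    have h22 := congrArg Matrix.toBlocks₂₂ h
    simp only [Matrix.toBlocks_fromBlocks₁₁, Matrix.toBlocks_fromBlocks₁₂,
      Matrix.toBlocks_fromBlocks₂₁, Matrix.toBlocks_fromBlocks₂₂] at h11 h12 h21 h22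
    have dual : AllPass Aᵀ Hᵀ Bᵀ Jᵀ := by
      apply allpass_of_blocks Aᵀ Bᵀ Q Hᵀ Jᵀ
      · simpa using h11
      · simpa using h12
      · simpa using h21
      · simpa using h22
    intro z hz hX hY
    have hz' : z⁻¹ ≠ 0 := inv_ne_zero hz
    have := dual z⁻¹ hz' (by simpa using hY) (by simpa [inv_inv] using hX)
    rw [mul_eq_one_comm] at this
    simpa [inv_inv] using this
end
end

section
/- Let A ∈ ℝ^{n×n}, C ∈ ℝ^{m×n}, and let P ∈ ℝ^{n×n} be a symmetric matrix such that M(P) = [[A P Aᵀ − P, A P Cᵀ],[C P Aᵀ, C P Cᵀ + I]] is positive semidefinite with rank M(P) = m. Then the kernel of P is Aᵀ-invariant, i.e., Aᵀ(ker P) ⊆ ker P. -/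
open Matrix

noncomputable section

theorem ker_P_Atranspose_invariant
    (n m : ℕ) (A : Matrix (Fin n) (Fin n) ℝ) (C : Matrix (Fin m) (Fin n) ℝ)
    (P : Matrix (Fin n) (Fin n) ℝ) (hPsymm : P.IsSymm)
    (hpsd : (Matrix.fromBlocks (A * P * Aᵀ - P) (A * P * Cᵀ)
      (C * P * Aᵀ) (C * P * Cᵀ + 1)).PosSemidef)
    (hrank : (Matrix.fromBlocks (A * P * Aᵀ - P) (A * P * Cᵀ)
      (C * P * Aᵀ) (C * P * Cᵀ + 1)).rank = m) :
    ∀ v : Fin n → ℝ, P *ᵥ v = 0 → P *ᵥ (Aᵀ *ᵥ v) = 0 := by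
  obtain ⟨B, hB⟩ : ∃ B : Matrix (Fin n ⊕ Fin m) (Fin n ⊕ Fin m) ℝ,
      Matrix.fromBlocks (A * P * Aᵀ - P) (A * P * Cᵀ) (C * P * Aᵀ) (C * P * Cᵀ + 1) = Bᴴ * B := by
    open scoped MatrixOrder in exact CStarAlgebra.nonneg_iff_eq_star_mul_self.mp hpsd.nonneg
  set G : Matrix (Fin n ⊕ Fin m) (Fin n) ℝ := fromRows A C with hG
  set X : Matrix (Fin n) (Fin n ⊕ Fin m) ℝ := P * Gᵀ with hX
  set J : Matrix (Fin n ⊕ Fin m) (Fin n ⊕ Fin m) ℝ :=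
    fromBlocks P 0 0 (-1) with hJdef
  have hJ : G * X - Bᴴ * B = J := by
    rw [hX, hG, transpose_fromRows, mul_fromCols, fromRows_mul_fromCols, ← hB, hJdef]
    ext (i | i) (j | j) <;>
      simp [Matrix.fromBlocks, Matrix.mul_assoc, Matrix.sub_apply, Matrix.add_apply]
  -- membership in ker J
  have hkerJ : ∀ y : Fin n ⊕ Fin m → ℝ,
      J *ᵥ y = 0 ↔ P *ᵥ (y ∘ Sum.inl) = 0 ∧ y ∘ Sum.inr = 0 := by
    intro y
    rw [hJdef, fromBlocks_mulVec]
    constructor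
    · intro h
      have h1 := congrArg (fun f => f ∘ Sum.inl) h
      have h2 := congrArg (fun f => f ∘ Sum.inr) h
      simp only [Sum.elim_comp_inl, Sum.elim_comp_inr] at h1 h2
      simp only [zero_mulVec, add_zero, zero_add, neg_mulVec, one_mulVec] at h1 h2
      refine ⟨by simpa using h1, by simpa [neg_eq_zero] using h2⟩
    · rintro ⟨h1, h2⟩
      rw [h1, h2]
      ext (i | i) <;> simp
  -- the intersection of kernels
  set KX := LinearMap.ker X.mulVecLin with hKX
  set KB := LinearMap.ker B.mulVecLin with hKB
  set KJ := LinearMap.ker J.mulVecLin with hKJ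
  have hsub : KX ⊓ KB ≤ KJ := by
    rintro y ⟨hy1, hy2⟩
    have hy1' : X *ᵥ y = 0 := hy1
    have hy2' : B *ᵥ y = 0 := hy2
    show J *ᵥ y = 0
    have hstep : J *ᵥ y = G *ᵥ (X *ᵥ y) - Bᴴ *ᵥ (B *ᵥ y) := by
      rw [← hJ, Matrix.sub_mulVec, Matrix.mulVec_mulVec, Matrix.mulVec_mulVec]
    rw [hstep, hy1', hy2']
    simp
  -- dimension bookkeeping
  have hcard : Module.finrank ℝ ((Fin n ⊕ Fin m) → ℝ) = n + m := by
    simp [Module.finrank_fintype_fun_eq_card]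
  have hrn : ∀ (k l : Type) [Fintype k] [Fintype l] [DecidableEq l] (N : Matrix k l ℝ),
      N.rank + Module.finrank ℝ (LinearMap.ker N.mulVecLin) = Module.finrank ℝ (l → ℝ) := by
    intro k l _ _ _ N
    exact LinearMap.finrank_range_add_finrank_ker N.mulVecLin
  have hX1 := hrn _ _ X
  have hB1 := hrn _ _ B
  have hJ1 := hrn _ _ J
  rw [← hKX] at hX1
  rw [← hKB] at hB1
  rw [← hKJ] at hJ1
  have hXle : X.rank ≤ P.rank := Matrix.rank_mul_le_left P Gᵀ
  have hBrank : B.rank = m := by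
    rw [← Matrix.rank_conjTranspose_mul_self, ← hB, hrank]
  -- finrank KJ ≤ finrank ker P
  have hinj : Module.finrank ℝ KJ ≤ Module.finrank ℝ (LinearMap.ker P.mulVecLin) := by
    have hmt : ∀ y ∈ KJ, (LinearMap.funLeft ℝ ℝ Sum.inl) y ∈ LinearMap.ker P.mulVecLin := by
      intro y hy
      have := (hkerJ y).mp hy
      exact this.1
    refine LinearMap.finrank_le_finrank_of_injective
      (f := ((LinearMap.funLeft ℝ ℝ (Sum.inl : Fin n → Fin n ⊕ Fin m))).restrict hmt) ?_
    intro y z hyz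
    have h1 : (y : Fin n ⊕ Fin m → ℝ) ∘ Sum.inl = (z : Fin n ⊕ Fin m → ℝ) ∘ Sum.inl := by
      exact congrArg Subtype.val hyz
    have hy2 := ((hkerJ y).mp y.2).2
    have hz2 := ((hkerJ z).mp z.2).2
    ext (i | i)
    · exact congrFun h1 i
    · rw [show (y : Fin n ⊕ Fin m → ℝ) (Sum.inr i) = 0 from congrFun hy2 i,
        show (z : Fin n ⊕ Fin m → ℝ) (Sum.inr i) = 0 from congrFun hz2 i]
  have hP1 := hrn _ _ P
  have hPcard : Module.finrank ℝ (Fin n → ℝ) = n := by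
    simp [Module.finrank_fintype_fun_eq_card]
  -- inf dimension
  have hsupinf := Submodule.finrank_sup_add_finrank_inf_eq KX KB
  have hsuple : Module.finrank ℝ ↥(KX ⊔ KB) ≤ n + m := by
    rw [← hcard]; exact Submodule.finrank_le _
  have hfle : Module.finrank ℝ KJ ≤ Module.finrank ℝ ↥(KX ⊓ KB) := by
    have hPrle : P.rank ≤ n := by
      have := Matrix.rank_le_card_width P; simpa using this
    rw [hcard] at hX1 hB1 hJ1
    rw [hPcard] at hP1
    omega
  have heq : KX ⊓ KB = KJ := Submodule.eq_of_le_of_finrank_le hsub hfle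
  -- conclude
  intro v hv
  have hy : (Sum.elim v 0 : Fin n ⊕ Fin m → ℝ) ∈ KJ := by
    show J *ᵥ _ = 0
    rw [hkerJ]
    constructor
    · simpa using hv
    · ext i; simp
  rw [← heq] at hy
  have hXy : X *ᵥ (Sum.elim v 0) = 0 := hy.1
  rw [hX, ← Matrix.mulVec_mulVec, hG, transpose_fromRows, fromCols_mulVec_sumElim] at hXy
  simpa using hXy
end
end

section
/- Let A ∈ ℝ^{n×n}, B ∈ ℝ^{n×m}, and let Q ∈ ℝ^{n×n} be a symmetric matrix such that N(Q) = [[Aᵀ Q A − Q, Aᵀ Q B],[Bᵀ Q A, Bᵀ Q B + I]] is positive semidefinite with rank N(Q) = m. Then the kernel of Q is A-invariant, i.e., A(ker Q) ⊆ ker Q. -/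
open Matrix

noncomputable section

/-- `(M *ᵥ a) ⬝ᵥ b = a ⬝ᵥ (Mᵀ *ᵥ b)`. -/
private lemma dot_mulVec_left {k l : Type*} [Fintype k] [Fintype l]
    (M : Matrix k l ℝ) (a : l → ℝ) (b : k → ℝ) :
    (M *ᵥ a) ⬝ᵥ b = a ⬝ᵥ (Mᵀ *ᵥ b) := by
  calc (M *ᵥ a) ⬝ᵥ b = b ⬝ᵥ (M *ᵥ a) := dotProduct_comm _ _
    _ = (b ᵥ* M) ⬝ᵥ a := dotProduct_mulVec _ _ _
    _ = a ⬝ᵥ (b ᵥ* M) := dotProduct_comm _ _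
    _ = a ⬝ᵥ (Mᵀ *ᵥ b) := by rw [Matrix.mulVec_transpose]

set_option maxHeartbeats 1000000 in
set_option synthInstance.maxHeartbeats 400000 in
theorem ker_Q_A_invariant
    (n m : ℕ) (A : Matrix (Fin n) (Fin n) ℝ) (B : Matrix (Fin n) (Fin m) ℝ)
    (Q : Matrix (Fin n) (Fin n) ℝ) (hQsymm : Q.IsSymm)
    (hpsd : (Matrix.fromBlocks (Aᵀ * Q * A - Q) (Aᵀ * Q * B)
      (Bᵀ * Q * A) (Bᵀ * Q * B + 1)).PosSemidef)
    (hrank : (Matrix.fromBlocks (Aᵀ * Q * A - Q) (Aᵀ * Q * B)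
      (Bᵀ * Q * A) (Bᵀ * Q * B + 1)).rank = m) :
    ∀ v : Fin n → ℝ, Q *ᵥ v = 0 → Q *ᵥ (A *ᵥ v) = 0 := by
  classical
  intro v hv
  set NB : Matrix (Fin n ⊕ Fin m) (Fin n ⊕ Fin m) ℝ :=
    Matrix.fromBlocks (Aᵀ * Q * A - Q) (Aᵀ * Q * B) (Bᵀ * Q * A) (Bᵀ * Q * B + 1) with hNB
  set K : Submodule ℝ ((Fin n ⊕ Fin m) → ℝ) := LinearMap.ker NB.mulVecLin with hK
  set σ : ((Fin n ⊕ Fin m) → ℝ) →ₗ[ℝ] (Fin n → ℝ) :=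
    A.mulVecLin ∘ₗ LinearMap.funLeft ℝ ℝ Sum.inl +
    B.mulVecLin ∘ₗ LinearMap.funLeft ℝ ℝ Sum.inr with hσdef
  have hσ : ∀ z : (Fin n ⊕ Fin m) → ℝ,
      σ z = A *ᵥ (z ∘ Sum.inl) + B *ᵥ (z ∘ Sum.inr) := by
    intro z
    rfl
  -- block equations for elements of the kernel of NB
  have hblock : ∀ z ∈ K,
      (Aᵀ * Q * A - Q) *ᵥ (z ∘ Sum.inl) + (Aᵀ * Q * B) *ᵥ (z ∘ Sum.inr) = 0 ∧
      (Bᵀ * Q * A) *ᵥ (z ∘ Sum.inl) + (Bᵀ * Q * B + 1) *ᵥ (z ∘ Sum.inr) = 0 := by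
    intro z hz
    have h0 : NB *ᵥ z = 0 := by
      simpa [Matrix.mulVecLin_apply] using (LinearMap.mem_ker.mp hz)
    have h1 := Matrix.fromBlocks_mulVec (Aᵀ * Q * A - Q) (Aᵀ * Q * B)
      (Bᵀ * Q * A) (Bᵀ * Q * B + 1) z
    rw [← hNB, h0] at h1
    refine ⟨funext fun i => ?_, funext fun j => ?_⟩
    · simpa using (congrFun h1.symm (Sum.inl i))
    · simpa using (congrFun h1.symm (Sum.inr j))
  have key1 : ∀ z ∈ K, Aᵀ *ᵥ (Q *ᵥ σ z) = Q *ᵥ (z ∘ Sum.inl) := by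
    intro z hz
    obtain ⟨h1, -⟩ := hblock z hz
    calc Aᵀ *ᵥ (Q *ᵥ σ z)
        = (Aᵀ * Q * A) *ᵥ (z ∘ Sum.inl) + (Aᵀ * Q * B) *ᵥ (z ∘ Sum.inr) := by
          rw [hσ z, Matrix.mulVec_add, Matrix.mulVec_add, Matrix.mulVec_mulVec,
            Matrix.mulVec_mulVec, Matrix.mulVec_mulVec, Matrix.mulVec_mulVec,
            Matrix.mul_assoc, Matrix.mul_assoc]
      _ = ((Aᵀ * Q * A - Q) *ᵥ (z ∘ Sum.inl) + (Aᵀ * Q * B) *ᵥ (z ∘ Sum.inr))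
          + Q *ᵥ (z ∘ Sum.inl) := by rw [Matrix.sub_mulVec]; abel
      _ = Q *ᵥ (z ∘ Sum.inl) := by rw [h1, zero_add]
  have key2 : ∀ z ∈ K, Bᵀ *ᵥ (Q *ᵥ σ z) = -(z ∘ Sum.inr) := by
    intro z hz
    obtain ⟨-, h2⟩ := hblock z hz
    have e : ((Bᵀ * Q * A) *ᵥ (z ∘ Sum.inl) + (Bᵀ * Q * B) *ᵥ (z ∘ Sum.inr))
        + (z ∘ Sum.inr) = 0 := by
      rw [Matrix.add_mulVec, Matrix.one_mulVec] at h2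
      rw [add_assoc]; exact h2
    calc Bᵀ *ᵥ (Q *ᵥ σ z)
        = (Bᵀ * Q * A) *ᵥ (z ∘ Sum.inl) + (Bᵀ * Q * B) *ᵥ (z ∘ Sum.inr) := by
          rw [hσ z, Matrix.mulVec_add, Matrix.mulVec_add, Matrix.mulVec_mulVec,
            Matrix.mulVec_mulVec, Matrix.mulVec_mulVec, Matrix.mulVec_mulVec,
            Matrix.mul_assoc, Matrix.mul_assoc]
      _ = -(z ∘ Sum.inr) := eq_neg_of_add_eq_zero_left e
  -- dimension of K
  have hKdim : Module.finrank ℝ K = n := by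
    have h := LinearMap.finrank_range_add_finrank_ker NB.mulVecLin
    have hdomain : Module.finrank ℝ ((Fin n ⊕ Fin m) → ℝ) = n + m := by
      simp [Module.finrank_fintype_fun_eq_card]
    have hr : Module.finrank ℝ (LinearMap.range NB.mulVecLin) = m := hrank
    rw [hdomain, hr, ← hK] at h
    omega
  -- the composite map K → (Fin n → ℝ) ⧸ ker Q
  set c : K →ₗ[ℝ] ((Fin n → ℝ) ⧸ LinearMap.ker Q.mulVecLin) :=
    ((LinearMap.ker Q.mulVecLin).mkQ ∘ₗ σ).domRestrict K with hc
  have hmemkerc : ∀ w : K, c w = 0 →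
      Q *ᵥ σ (w : (Fin n ⊕ Fin m) → ℝ) = 0 := by
    intro w hw
    have hmem : σ (w : (Fin n ⊕ Fin m) → ℝ) ∈ LinearMap.ker Q.mulVecLin := by
      rwa [hc, LinearMap.domRestrict_apply, LinearMap.comp_apply, Submodule.mkQ_apply,
        Submodule.Quotient.mk_eq_zero] at hw
    simpa [Matrix.mulVecLin_apply] using (LinearMap.mem_ker.mp hmem)
  -- the kernel of c injects in the kernel of Q
  have hinj : Module.finrank ℝ (LinearMap.ker c) ≤
      Module.finrank ℝ (LinearMap.ker Q.mulVecLin) := by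
    set f : LinearMap.ker c →ₗ[ℝ] (Fin n → ℝ) :=
      (LinearMap.funLeft ℝ ℝ Sum.inl) ∘ₗ K.subtype ∘ₗ (LinearMap.ker c).subtype with hfdef
    have hf0 : ∀ w : LinearMap.ker c, Q *ᵥ σ ((w : K) : (Fin n ⊕ Fin m) → ℝ) = 0 :=
      fun w => hmemkerc w.1 (LinearMap.mem_ker.mp w.2)
    have hf : ∀ w : LinearMap.ker c, f w ∈ LinearMap.ker Q.mulVecLin := by
      intro w
      rw [LinearMap.mem_ker]
      have h1 := key1 ((w : K) : (Fin n ⊕ Fin m) → ℝ) (w : K).2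
      have : Q *ᵥ (((w : K) : (Fin n ⊕ Fin m) → ℝ) ∘ Sum.inl) = 0 := by
        rw [← h1, hf0 w, Matrix.mulVec_zero]
      exact this
    have hker0 : LinearMap.ker (LinearMap.codRestrict _ f hf) = ⊥ := by
      rw [Submodule.eq_bot_iff]
      intro w hw
      have hw0 : f w = 0 := by
        have := LinearMap.mem_ker.mp hw
        have h2 := congrArg Subtype.val this
        simpa [LinearMap.codRestrict_apply] using h2
      have hinl : (((w : K) : (Fin n ⊕ Fin m) → ℝ)) ∘ Sum.inl = 0 := by
        exact hw0
      have hinr : (((w : K) : (Fin n ⊕ Fin m) → ℝ)) ∘ Sum.inr = 0 := by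
        have h2 := key2 ((w : K) : (Fin n ⊕ Fin m) → ℝ) (w : K).2
        rw [hf0 w, Matrix.mulVec_zero] at h2
        simpa using h2.symm
      have hz : ((w : K) : (Fin n ⊕ Fin m) → ℝ) = 0 := by
        funext i
        cases i with
        | inl i => exact congrFun hinl i
        | inr j => exact congrFun hinr j
      exact Subtype.ext (Subtype.ext hz)
    have hi : Function.Injective (LinearMap.codRestrict _ f hf) :=
      (injective_iff_map_eq_zero _).mpr fun w hw => by
        rw [← Submodule.mem_bot ℝ, ← hker0]; exact hw
    exact LinearMap.finrank_le_finrank_of_injective hi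
  -- c is surjective
  have hsurj : Function.Surjective c := by
    rw [← LinearMap.range_eq_top]
    apply Submodule.eq_top_of_finrank_eq
    have hrn := LinearMap.finrank_range_add_finrank_ker c
    rw [hKdim] at hrn
    have hq := Submodule.finrank_quotient_add_finrank (LinearMap.ker Q.mulVecLin)
    have hn : Module.finrank ℝ (Fin n → ℝ) = n := by
      simp [Module.finrank_fintype_fun_eq_card]
    rw [hn] at hq
    have hle := Submodule.finrank_le (LinearMap.range c)
    omega
  -- the decomposition of x := Q *ᵥ (A *ᵥ v)
  set x : Fin n → ℝ := Q *ᵥ (A *ᵥ v) with hx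
  obtain ⟨z0, hz0⟩ := hsurj (Submodule.Quotient.mk x)
  have hz0' : (Submodule.Quotient.mk (σ ((z0 : K) : (Fin n ⊕ Fin m) → ℝ)) :
      (Fin n → ℝ) ⧸ LinearMap.ker Q.mulVecLin) = Submodule.Quotient.mk x := by
    rw [← hz0, hc]
    simp [LinearMap.domRestrict_apply]
  have hk : Q *ᵥ (σ ((z0 : K) : (Fin n ⊕ Fin m) → ℝ) - x) = 0 := by
    have hmem := (Submodule.Quotient.eq _).mp hz0'
    simpa [Matrix.mulVecLin_apply] using (LinearMap.mem_ker.mp hmem)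
  have hxσ : x ⬝ᵥ σ ((z0 : K) : (Fin n ⊕ Fin m) → ℝ) = 0 := by
    calc x ⬝ᵥ σ ((z0 : K) : (Fin n ⊕ Fin m) → ℝ)
        = (A *ᵥ v) ⬝ᵥ (Qᵀ *ᵥ σ ((z0 : K) : (Fin n ⊕ Fin m) → ℝ)) :=
          dot_mulVec_left _ _ _
      _ = (A *ᵥ v) ⬝ᵥ (Q *ᵥ σ ((z0 : K) : (Fin n ⊕ Fin m) → ℝ)) := by rw [hQsymm]
      _ = v ⬝ᵥ (Aᵀ *ᵥ (Q *ᵥ σ ((z0 : K) : (Fin n ⊕ Fin m) → ℝ))) :=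
          dot_mulVec_left _ _ _
      _ = v ⬝ᵥ (Q *ᵥ (((z0 : K) : (Fin n ⊕ Fin m) → ℝ) ∘ Sum.inl)) := by
          rw [key1 _ (z0 : K).2]
      _ = (Qᵀ *ᵥ v) ⬝ᵥ (((z0 : K) : (Fin n ⊕ Fin m) → ℝ) ∘ Sum.inl) := by
          rw [dot_mulVec_left Qᵀ, Matrix.transpose_transpose]
      _ = 0 := by rw [hQsymm, hv, zero_dotProduct]
  have hxk : x ⬝ᵥ (σ ((z0 : K) : (Fin n ⊕ Fin m) → ℝ) - x) = 0 := by
    calc x ⬝ᵥ (σ ((z0 : K) : (Fin n ⊕ Fin m) → ℝ) - x)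
        = (A *ᵥ v) ⬝ᵥ (Qᵀ *ᵥ (σ ((z0 : K) : (Fin n ⊕ Fin m) → ℝ) - x)) :=
          dot_mulVec_left _ _ _
      _ = (A *ᵥ v) ⬝ᵥ (Q *ᵥ (σ ((z0 : K) : (Fin n ⊕ Fin m) → ℝ) - x)) := by rw [hQsymm]
      _ = (A *ᵥ v) ⬝ᵥ (0 : Fin n → ℝ) := by rw [hk]
      _ = 0 := dotProduct_zero _
  have hxx : x ⬝ᵥ x = 0 := by
    have hsplit : x ⬝ᵥ x = x ⬝ᵥ σ ((z0 : K) : (Fin n ⊕ Fin m) → ℝ)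
        - x ⬝ᵥ (σ ((z0 : K) : (Fin n ⊕ Fin m) → ℝ) - x) := by
      rw [dotProduct_sub]; ring
    rw [hsplit, hxσ, hxk, sub_zero]
  exact dotProduct_self_eq_zero.mp hxx
end
end

section
/- Let (A,B,C,D) with A ∈ ℝ^{n×n}, B ∈ ℝ^{n×m}, C ∈ ℝ^{m×n}, D ∈ ℝ^{m×m} be a minimal realization of an all-pass function and assume A is invertible. Then a symmetric matrix Q ∈ ℝ^{n×n} satisfies the constrained LMI (N(Q) ⪰ 0 and rank N(Q) = m) if and only if I + Bᵀ Q B is positive definite and Q satisfies the homogeneous algebraic Riccati equation Q = Aᵀ Q A − Aᵀ Q B (I + Bᵀ Q B)⁻¹ Bᵀ Q A. Dually, a symmetric matrix P satisfies the constrained LMI (M(P) ⪰ 0 and rank M(P) = m) if and only if I + C P Cᵀ is positive definite and P = A P Aᵀ − A P Cᵀ (I + C P Cᵀ)⁻¹ C P Aᵀ. -/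
open Matrix

noncomputable section

/-- j-embedding lemma workhorse: rank of block diagonal with invertible second block. -/
lemma rank_fromBlocks_diag {n m : ℕ} (E : Matrix (Fin n) (Fin n) ℝ)
    (S : Matrix (Fin m) (Fin m) ℝ) (hS : IsUnit S) :
    (fromBlocks E 0 0 S).rank = E.rank + m := by
  classical
  set D : Matrix (Fin n ⊕ Fin m) (Fin n ⊕ Fin m) ℝ := fromBlocks E 0 0 S with hD
  let j₁ : (Fin n → ℝ) →ₗ[ℝ] (Fin n ⊕ Fin m → ℝ) :=
    { toFun := fun x => Sum.elim x 0
      map_add' := by intro x y; funext i; cases i <;> simp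
      map_smul' := by intro c x; funext i; cases i <;> simp }
  let j₂ : (Fin m → ℝ) →ₗ[ℝ] (Fin n ⊕ Fin m → ℝ) :=
    { toFun := fun x => Sum.elim 0 x
      map_add' := by intro x y; funext i; cases i <;> simp
      map_smul' := by intro c x; funext i; cases i <;> simp }
  have hj₁ : Function.Injective j₁ := by
    intro x y h
    funext i
    exact congrFun h (Sum.inl i)
  have hj₂ : Function.Injective j₂ := by
    intro x y h
    funext i
    exact congrFun h (Sum.inr i)
  set p := (LinearMap.range E.mulVecLin).map j₁ with hp
  set q := (LinearMap.range S.mulVecLin).map j₂ with hq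
  have hDmul : ∀ v : Fin n ⊕ Fin m → ℝ,
      D *ᵥ v = j₁ (E *ᵥ (v ∘ Sum.inl)) + j₂ (S *ᵥ (v ∘ Sum.inr)) := by
    intro v
    rw [hD, fromBlocks_mulVec]
    funext i
    cases i <;> simp [j₁, j₂]
  have hrange : LinearMap.range D.mulVecLin = p ⊔ q := by
    apply le_antisymm
    · rintro _ ⟨v, rfl⟩
      rw [mulVecLin_apply, hDmul]
      exact Submodule.add_mem_sup (Submodule.mem_map_of_mem ⟨_, rfl⟩)
        (Submodule.mem_map_of_mem ⟨_, rfl⟩)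
    · apply sup_le
      · rintro _ ⟨_, ⟨x, rfl⟩, rfl⟩
        refine ⟨Sum.elim x 0, ?_⟩
        rw [mulVecLin_apply, hDmul]
        simp
      · rintro _ ⟨_, ⟨y, rfl⟩, rfl⟩
        refine ⟨Sum.elim 0 y, ?_⟩
        rw [mulVecLin_apply, hDmul]
        simp
  have hinf : p ⊓ q = ⊥ := by
    rw [eq_bot_iff]
    rintro x ⟨⟨u, hu, hxu⟩, ⟨w, hw, hxw⟩⟩
    have h1 : ∀ i, x (Sum.inl i) = 0 := by
      intro i
      rw [← hxw]; rfl
    have h2 : ∀ i, x (Sum.inr i) = 0 := by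
      intro i
      rw [← hxu]; rfl
    have : x = 0 := by funext i; cases i; exacts [h1 _, h2 _]
    simp [this]
  have hfp : Module.finrank ℝ p = E.rank := by
    rw [hp]
    exact (LinearEquiv.finrank_eq
      ((LinearMap.range E.mulVecLin).equivMapOfInjective j₁ hj₁)).symm
  have hfq : Module.finrank ℝ q = m := by
    rw [hq]
    have := (LinearEquiv.finrank_eq
      ((LinearMap.range S.mulVecLin).equivMapOfInjective j₂ hj₂)).symm
    rw [this]
    have : S.rank = m := by
      rw [Matrix.rank_of_isUnit S hS, Fintype.card_fin]
    exact this
  have := Submodule.finrank_sup_add_finrank_inf_eq p q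
  rw [hinf, finrank_bot, add_zero] at this
  rw [Matrix.rank, hrange, this, hfp, hfq]


lemma eq_zero_of_rank_eq_zero {n : ℕ} {E : Matrix (Fin n) (Fin n) ℝ} (h : E.rank = 0) :
    E = 0 := by
  have hrange : LinearMap.range E.mulVecLin = ⊥ := by
    rw [Matrix.rank] at h
    exact Submodule.finrank_eq_zero.mp h
  ext i j
  have h0 : E *ᵥ Pi.single j 1 = 0 := by
    have : E.mulVecLin (Pi.single j 1) ∈ (⊥ : Submodule ℝ (Fin n → ℝ)) := by
      rw [← hrange]; exact ⟨_, rfl⟩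
    simpa using this
  have := congrFun h0 i
  simpa [Matrix.mulVec_single] using this

lemma block_identity {n m : ℕ} (X : Matrix (Fin n) (Fin n) ℝ) (K : Matrix (Fin n) (Fin m) ℝ)
    (S : Matrix (Fin m) (Fin m) ℝ) (hSsymm : Sᵀ = S) (hS : IsUnit S) :
    fromBlocks X K Kᵀ S =
      (fromBlocks 1 (K * S⁻¹) 0 1) *
        (fromBlocks (X - K * S⁻¹ * Kᵀ) 0 0 S) * (fromBlocks 1 (K * S⁻¹) 0 1)ᵀ := by
  have hSd : IsUnit S.det := (Matrix.isUnit_iff_isUnit_det S).mp hS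
  have h1 : S⁻¹ * S = 1 := Matrix.nonsing_inv_mul S hSd
  have h2 : S * S⁻¹ = 1 := Matrix.mul_nonsing_inv S hSd
  have hSinv : (S⁻¹)ᵀ = S⁻¹ := by rw [Matrix.transpose_nonsing_inv, hSsymm]
  have h2' : S * (S⁻¹ * Kᵀ) = Kᵀ := by rw [← Matrix.mul_assoc, h2, Matrix.one_mul]
  simp only [fromBlocks_transpose, transpose_one, transpose_zero, Matrix.transpose_mul, hSinv,
    fromBlocks_multiply, Matrix.one_mul, Matrix.mul_one, Matrix.zero_mul, Matrix.mul_zero,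
    add_zero, zero_add, Matrix.mul_assoc, h1, h2', sub_add_cancel]

lemma key_lemma {n m : ℕ} (A : Matrix (Fin n) (Fin n) ℝ) (B : Matrix (Fin n) (Fin m) ℝ)
    (hA : IsUnit A) (Q : Matrix (Fin n) (Fin n) ℝ) (hQ : Q.IsSymm) :
    ((fromBlocks (Aᵀ * Q * A - Q) (Aᵀ * Q * B) (Bᵀ * Q * A) (Bᵀ * Q * B + 1)).PosSemidef ∧
      (fromBlocks (Aᵀ * Q * A - Q) (Aᵀ * Q * B) (Bᵀ * Q * A) (Bᵀ * Q * B + 1)).rank = m) ↔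
    (((1 : Matrix (Fin m) (Fin m) ℝ) + Bᵀ * Q * B).PosDef ∧
      Q = Aᵀ * Q * A - Aᵀ * Q * B * (1 + Bᵀ * Q * B)⁻¹ * (Bᵀ * Q * A)) := by
  have hQe : Qᵀ = Q := hQ.eq
  set S : Matrix (Fin m) (Fin m) ℝ := 1 + Bᵀ * Q * B with hSdef
  set K : Matrix (Fin n) (Fin m) ℝ := Aᵀ * Q * B with hKdef
  have hKT : Bᵀ * Q * A = Kᵀ := by
    rw [hKdef]
    simp [Matrix.transpose_mul, Matrix.mul_assoc, hQe]
  have hScomm : Bᵀ * Q * B + 1 = S := by rw [hSdef, add_comm]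
  have hSsymm : Sᵀ = S := by
    rw [hSdef]
    simp [Matrix.transpose_add, Matrix.transpose_mul, Matrix.mul_assoc, hQe]
  have hSherm : S.IsHermitian := by
    show Sᴴ = S
    rw [conjTranspose_eq_transpose_of_trivial, hSsymm]
  rw [hKT, hScomm]
  set X : Matrix (Fin n) (Fin n) ℝ := Aᵀ * Q * A - Q with hXdef
  set N : Matrix (Fin n ⊕ Fin m) (Fin n ⊕ Fin m) ℝ := fromBlocks X K Kᵀ S with hNdef
  set U : Matrix (Fin n ⊕ Fin m) (Fin n ⊕ Fin m) ℝ := fromBlocks 1 (K * S⁻¹) 0 1 with hUdef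
  have hAT : IsUnit Aᵀ := by
    rw [Matrix.isUnit_iff_isUnit_det, Matrix.det_transpose]
    exact (Matrix.isUnit_iff_isUnit_det A).mp hA
  have hdetU : IsUnit U.det := by
    rw [hUdef, Matrix.det_fromBlocks_zero₂₁]
    simp
  have hdetUT : IsUnit Uᵀ.det := by rwa [Matrix.det_transpose]
  -- quadratic form of N at Sum.elim 0 x
  have hNv : ∀ x : Fin m → ℝ, N *ᵥ Sum.elim 0 x = Sum.elim (K *ᵥ x) (S *ᵥ x) := by
    intro x
    rw [hNdef, fromBlocks_mulVec]
    simp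
  have hform : ∀ x : Fin m → ℝ,
      star (Sum.elim (0 : Fin n → ℝ) x) ⬝ᵥ N *ᵥ Sum.elim 0 x = star x ⬝ᵥ S *ᵥ x := by
    intro x
    rw [hNv x, dotProduct_block]
    simp
  constructor
  · rintro ⟨hPSD, hrank⟩
    have hSpd : S.PosDef := by
      refine PosDef.of_dotProduct_mulVec_pos hSherm (fun x hx => ?_)
      have hnonneg : 0 ≤ star x ⬝ᵥ S *ᵥ x := by
        rw [← hform x]; exact hPSD.dotProduct_mulVec_nonneg _
      rcases hnonneg.lt_or_eq with h | h
      · exact h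
      · exfalso
        have h0 : N *ᵥ Sum.elim 0 x = 0 :=
          (hPSD.dotProduct_mulVec_zero_iff _).mp (by rw [hform x, ← h])
        rw [hNv x] at h0
        have hKx : K *ᵥ x = 0 := by
          funext i; exact congrFun h0 (Sum.inl i)
        have hSx : S *ᵥ x = 0 := by
          funext i; exact congrFun h0 (Sum.inr i)
        have hQBx : Q *ᵥ (B *ᵥ x) = 0 := by
          have : Aᵀ *ᵥ (Q *ᵥ (B *ᵥ x)) = Aᵀ *ᵥ 0 := by
            rw [Matrix.mulVec_zero, Matrix.mulVec_mulVec, Matrix.mulVec_mulVec, ← hKdef]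
            exact hKx
          exact Matrix.mulVec_injective_iff_isUnit.mpr hAT this
        have hxz : x = 0 := by
          have : S *ᵥ x = x := by
            rw [hSdef, Matrix.add_mulVec, Matrix.one_mulVec, ← Matrix.mulVec_mulVec,
              ← Matrix.mulVec_mulVec, hQBx, Matrix.mulVec_zero, add_zero]
          rw [this] at hSx
          exact hSx
        exact hx hxz
    have hSu : IsUnit S := hSpd.isUnit
    have hid := block_identity X K S hSsymm hSu
    rw [← hUdef] at hid
    rw [hNdef, hid, Matrix.rank_mul_eq_left_of_isUnit_det Uᵀ _ hdetUT,
      Matrix.rank_mul_eq_right_of_isUnit_det U _ hdetU,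
      rank_fromBlocks_diag _ S hSu] at hrank
    have hE0 : X - K * S⁻¹ * Kᵀ = 0 := by
      apply eq_zero_of_rank_eq_zero
      omega
    refine ⟨hSpd, ?_⟩
    have h3 : Aᵀ * Q * A - Q = K * S⁻¹ * Kᵀ := by
      rw [← hXdef]; exact sub_eq_zero.mp hE0
    rw [← h3]
    abel
  · rintro ⟨hSpd, hric⟩
    have hSu : IsUnit S := hSpd.isUnit
    have hE0 : X - K * S⁻¹ * Kᵀ = 0 := by
      rw [hXdef, sub_sub]
      nth_rewrite 2 [hric]
      abel
    have hid := block_identity X K S hSsymm hSu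
    rw [← hUdef, hE0] at hid
    constructor
    · rw [hNdef, hid]
      have hDpsd : (fromBlocks (0 : Matrix (Fin n) (Fin n) ℝ) 0 0 S).PosSemidef := by
        refine PosSemidef.of_dotProduct_mulVec_nonneg ?_ ?_
        · show _ᴴ = _
          rw [conjTranspose_eq_transpose_of_trivial, fromBlocks_transpose]
          simp [hSsymm]
        · intro x
          have h := hSpd.posSemidef.dotProduct_mulVec_nonneg (x ∘ Sum.inr)
          rw [fromBlocks_mulVec, dotProduct_block]
          simpa using h
      rw [show Uᵀ = Uᴴ from (conjTranspose_eq_transpose_of_trivial U).symm]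
      exact hDpsd.mul_mul_conjTranspose_same U
    · rw [hNdef, hid, Matrix.rank_mul_eq_left_of_isUnit_det Uᵀ _ hdetUT,
        Matrix.rank_mul_eq_right_of_isUnit_det U _ hdetU,
        rank_fromBlocks_diag _ S hSu, Matrix.rank_zero, zero_add]


theorem CLMI_iff_riccati
    (n m : ℕ) (A : Matrix (Fin n) (Fin n) ℝ) (B : Matrix (Fin n) (Fin m) ℝ)
    (C : Matrix (Fin m) (Fin n) ℝ) (D : Matrix (Fin m) (Fin m) ℝ)
    (hreach : Reachable A B) (hobs : Observable A C) (hap : AllPass A B C D)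
    (hA : IsUnit A) :
    (∀ Q : Matrix (Fin n) (Fin n) ℝ, Q.IsSymm →
      (((Matrix.fromBlocks (Aᵀ * Q * A - Q) (Aᵀ * Q * B)
          (Bᵀ * Q * A) (Bᵀ * Q * B + 1)).PosSemidef ∧
        (Matrix.fromBlocks (Aᵀ * Q * A - Q) (Aᵀ * Q * B)
          (Bᵀ * Q * A) (Bᵀ * Q * B + 1)).rank = m) ↔
       (((1 : Matrix (Fin m) (Fin m) ℝ) + Bᵀ * Q * B).PosDef ∧
        Q = Aᵀ * Q * A - Aᵀ * Q * B * (1 + Bᵀ * Q * B)⁻¹ * (Bᵀ * Q * A)))) ∧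
    (∀ P : Matrix (Fin n) (Fin n) ℝ, P.IsSymm →
      (((Matrix.fromBlocks (A * P * Aᵀ - P) (A * P * Cᵀ)
          (C * P * Aᵀ) (C * P * Cᵀ + 1)).PosSemidef ∧
        (Matrix.fromBlocks (A * P * Aᵀ - P) (A * P * Cᵀ)
          (C * P * Aᵀ) (C * P * Cᵀ + 1)).rank = m) ↔
       (((1 : Matrix (Fin m) (Fin m) ℝ) + C * P * Cᵀ).PosDef ∧
        P = A * P * Aᵀ - A * P * Cᵀ * (1 + C * P * Cᵀ)⁻¹ * (C * P * Aᵀ)))) := by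
  constructor
  · intro Q hQ
    exact key_lemma A B hA Q hQ
  · intro P hP
    have hAT : IsUnit Aᵀ := by
      rw [Matrix.isUnit_iff_isUnit_det, Matrix.det_transpose]
      exact (Matrix.isUnit_iff_isUnit_det A).mp hA
    have h := key_lemma Aᵀ Cᵀ hAT P hP
    simpa only [transpose_transpose] using h
end
end

section
/- Let A ∈ ℝ^{n×n} be invertible, C ∈ ℝ^{m×n}, and let P ∈ ℝ^{n×n} be a symmetric matrix such that I + C P Cᵀ is positive definite and P satisfies the homogeneous algebraic Riccati equation P = A P Aᵀ − A P Cᵀ (I + C P Cᵀ)⁻¹ C P Aᵀ. Define L := (I + C P Cᵀ)^{1/2} (the positive semidefinite square root) and G := A P Cᵀ L⁻¹. Then the transfer function Q_L(z) = C(zI−A)⁻¹G + L is all-pass. -/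
open Matrix

noncomputable section

set_option maxHeartbeats 1600000 in
theorem riccati_solution_gives_allpass_factor
    (n m : ℕ) (A : Matrix (Fin n) (Fin n) ℝ) (C : Matrix (Fin m) (Fin n) ℝ)
    (hA : IsUnit A)
    (P : Matrix (Fin n) (Fin n) ℝ) (hPsymm : P.IsSymm)
    (hpos : ((1 : Matrix (Fin m) (Fin m) ℝ) + C * P * Cᵀ).PosDef)
    (hric : P = A * P * Aᵀ - A * P * Cᵀ * (1 + C * P * Cᵀ)⁻¹ * (C * P * Aᵀ)) :
    ∀ L : Matrix (Fin m) (Fin m) ℝ, L.PosSemidef →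
      L * L = 1 + C * P * Cᵀ →
      AllPass A (A * P * Cᵀ * L⁻¹) C L := by
  intro L hL hLsq
  have hLsymm : Lᵀ = L := hL.1
  have hPs : Pᵀ = P := hPsymm
  have hRdet : IsUnit ((1 : Matrix (Fin m) (Fin m) ℝ) + C * P * Cᵀ).det :=
    isUnit_iff_ne_zero.mpr hpos.det_pos.ne'
  have hLdet : IsUnit L.det := by
    have h2 : L.det * L.det = ((1 : Matrix (Fin m) (Fin m) ℝ) + C * P * Cᵀ).det := by
      rw [← Matrix.det_mul, hLsq]
    refine isUnit_iff_ne_zero.mpr fun h => ?_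
    rw [h, mul_zero] at h2
    exact hpos.det_pos.ne' h2.symm
  have hLinv : L⁻¹ᵀ = L⁻¹ := by rw [Matrix.transpose_nonsing_inv, hLsymm]
  have hLL : L⁻¹ * L⁻¹ = ((1 : Matrix (Fin m) (Fin m) ℝ) + C * P * Cᵀ)⁻¹ := by
    rw [← hLsq, Matrix.mul_inv_rev]
  have hGG : A * P * Cᵀ * ((1 : Matrix (Fin m) (Fin m) ℝ) + C * P * Cᵀ)⁻¹ * (C * P * Aᵀ)
      = A * P * Aᵀ - P := by
    have h := hric
    rw [eq_sub_iff_add_eq] at h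
    rw [← h]; abel
  intro z hz hz1 hz2
  set M : Matrix (Fin n) (Fin n) ℝ := (z • (1 : Matrix (Fin n) (Fin n) ℝ) - A)⁻¹ with hM
  set N : Matrix (Fin n) (Fin n) ℝ := (z⁻¹ • (1 : Matrix (Fin n) (Fin n) ℝ) - Aᵀ)⁻¹ with hN
  have hd1 : IsUnit (z • (1 : Matrix (Fin n) (Fin n) ℝ) - A).det :=
    (Matrix.isUnit_iff_isUnit_det _).mp hz1
  have hd2 : IsUnit (z⁻¹ • (1 : Matrix (Fin n) (Fin n) ℝ) - Aᵀ).det :=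
    (Matrix.isUnit_iff_isUnit_det _).mp hz2
  have e1 : M * (z • (1 : Matrix (Fin n) (Fin n) ℝ) - A) = 1 := Matrix.nonsing_inv_mul _ hd1
  have e2 : (z⁻¹ • (1 : Matrix (Fin n) (Fin n) ℝ) - Aᵀ) * N = 1 := Matrix.mul_nonsing_inv _ hd2
  have e3 : (z • (1 : Matrix (Fin n) (Fin n) ℝ) - A) * M = 1 := Matrix.mul_nonsing_inv _ hd1
  have e4 : N * (z⁻¹ • (1 : Matrix (Fin n) (Fin n) ℝ) - Aᵀ) = 1 := Matrix.nonsing_inv_mul _ hd2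
  set E : Matrix (Fin n) (Fin n) ℝ :=
    M * (A * P * Aᵀ - P) * N + M * (A * P) + P * Aᵀ * N + P with hE
  have e3' : ∀ X : Matrix (Fin n) (Fin n) ℝ,
      (z • (1 : Matrix (Fin n) (Fin n) ℝ) - A) * (M * X) = X := fun X => by
    rw [← Matrix.mul_assoc, e3, Matrix.one_mul]
  have h0 : (z • (1 : Matrix (Fin n) (Fin n) ℝ) - A) * E
      * (z⁻¹ • (1 : Matrix (Fin n) (Fin n) ℝ) - Aᵀ) = 0 := by
    rw [hE]
    simp only [Matrix.mul_add, Matrix.add_mul, Matrix.mul_assoc]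
    simp only [e3', e4, Matrix.mul_one]
    simp only [Matrix.mul_sub, Matrix.sub_mul, Matrix.smul_mul, Matrix.mul_smul, smul_smul,
      smul_sub, smul_add, Matrix.one_mul, Matrix.mul_one, mul_inv_cancel₀ hz, inv_mul_cancel₀ hz, one_smul,
      Matrix.mul_assoc]
    abel
  have hE0 : E = 0 := by
    calc E = (M * (z • (1 : Matrix (Fin n) (Fin n) ℝ) - A)) * E
        * ((z⁻¹ • (1 : Matrix (Fin n) (Fin n) ℝ) - Aᵀ) * N) := by rw [e1, e2]; simp
      _ = M * ((z • (1 : Matrix (Fin n) (Fin n) ℝ) - A) * E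
            * (z⁻¹ • (1 : Matrix (Fin n) (Fin n) ℝ) - Aᵀ)) * N := by
          simp only [Matrix.mul_assoc]
      _ = 0 := by rw [h0]; simp
  have hLiL : L⁻¹ * L = 1 := Matrix.nonsing_inv_mul _ hLdet
  have hLLi : L * L⁻¹ = 1 := Matrix.mul_nonsing_inv _ hLdet
  have hBT : (A * P * Cᵀ * L⁻¹)ᵀ = L⁻¹ * (C * P * Aᵀ) := by
    simp [Matrix.transpose_mul, hLinv, hPs, Matrix.mul_assoc]
  rw [hBT, hLsymm]
  have expand : (C * M * (A * P * Cᵀ * L⁻¹) + L) * (L⁻¹ * (C * P * Aᵀ) * N * Cᵀ + L)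
      = C * (M * (A * P * Cᵀ * (L⁻¹ * L⁻¹) * (C * P * Aᵀ)) * N) * Cᵀ
        + C * M * (A * P * Cᵀ * (L⁻¹ * L)) + (L * L⁻¹) * ((C * P * Aᵀ) * N * Cᵀ) + L * L := by
    simp only [Matrix.mul_add, Matrix.add_mul, Matrix.mul_assoc]
    abel
  rw [expand, hLiL, hLLi, hLL, hLsq]
  rw [show A * P * Cᵀ * (((1 : Matrix (Fin m) (Fin m) ℝ) + C * P * Cᵀ)⁻¹) * (C * P * Aᵀ)
      = A * P * Aᵀ - P from hGG]
  have hfin : C * E * Cᵀ + 1 = 1 := by rw [hE0]; simp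
  conv_rhs => rw [← hfin]
  rw [hE]
  simp only [Matrix.mul_sub, Matrix.sub_mul, Matrix.mul_add, Matrix.add_mul, Matrix.mul_one,
    Matrix.one_mul, Matrix.mul_assoc]
  abel
end
end

section
/- Let A ∈ ℝ^{n×n}, B ∈ ℝ^{n×m}, C ∈ ℝ^{m×n}, D ∈ ℝ^{m×m} be such that Q(z) = C(zI−A)⁻¹B + D is all-pass. Then there exist k ∈ ℕ, integers p₁, …, p_k with 0 < pᵢ ≤ m, orthogonal matrices U₁, …, U_k ∈ ℝ^{m×m}, and matrices B′ ∈ ℝ^{n×m}, D′ ∈ ℝ^{m×m} with D′ invertible, such that Q₀(z) := C(zI−A)⁻¹B′ + D′ is all-pass and for every real z ≠ 0 with zI−A invertible, Q(z) = Q₀(z) · ∏_{i=1}^{k} ( diag(I_{m−pᵢ}, z⁻¹ I_{pᵢ}) Uᵢ ). -/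
open Matrix

noncomputable section

open Polynomial


lemma myNatDegree_det_le {k d : ℕ} (M : Matrix (Fin k) (Fin k) ℝ[X])
    (h : ∀ i j, (M i j).natDegree ≤ d) : M.det.natDegree ≤ k * d := by
  rw [Matrix.det_apply']
  refine Polynomial.natDegree_sum_le_of_forall_le _ _ (fun σ _ => ?_)
  refine Polynomial.natDegree_mul_le.trans ?_
  rw [Polynomial.natDegree_intCast, zero_add]
  refine (Polynomial.natDegree_prod_le _ _).trans ?_
  calc ∑ i : Fin k, (M (σ i) i).natDegree ≤ ∑ _i : Fin k, d :=
        Finset.sum_le_sum (fun i _ => h _ _)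
    _ = k * d := by simp [mul_comm]

lemma adjugate_charmatrix_entry_natDegree {n : ℕ} (A : Matrix (Fin n) (Fin n) ℝ) (i j : Fin n) :
    ((charmatrix A).adjugate i j).natDegree ≤ n := by
  rw [Matrix.adjugate_apply]
  have := myNatDegree_det_le ((charmatrix A).updateRow j (Pi.single i 1)) (d := 1) ?_
  · simpa using this
  · intro a b
    rw [Matrix.updateRow_apply]
    split
    · rcases eq_or_ne b i with rfl | hne
      · simp
      · simp [Pi.single_apply, hne]
    · rw [charmatrix_apply]
      refine (natDegree_sub_le _ _).trans (max_le ?_ ?_)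
      · rw [Matrix.diagonal_apply]
        split <;> simp [natDegree_X_le]
      · simp

def Pmat {n m : ℕ} (A : Matrix (Fin n) (Fin n) ℝ) (B : Matrix (Fin n) (Fin m) ℝ)
    (C : Matrix (Fin m) (Fin n) ℝ) (D : Matrix (Fin m) (Fin m) ℝ) :
    Matrix (Fin m) (Fin m) ℝ[X] :=
  C.map Polynomial.C * (charmatrix A).adjugate * B.map Polynomial.C
    + A.charpoly • D.map Polynomial.C

lemma Pmat_entry_natDegree {n m : ℕ} (A : Matrix (Fin n) (Fin n) ℝ) (B : Matrix (Fin n) (Fin m) ℝ)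
    (C : Matrix (Fin m) (Fin n) ℝ) (D : Matrix (Fin m) (Fin m) ℝ) (i j : Fin m) :
    ((Pmat A B C D) i j).natDegree ≤ n := by
  unfold Pmat
  rw [Matrix.add_apply]
  refine (natDegree_add_le _ _).trans (max_le ?_ ?_)
  · rw [Matrix.mul_apply]
    refine natDegree_sum_le_of_forall_le _ _ fun l _ => ?_
    refine natDegree_mul_le.trans ?_
    have h2 : ((B.map Polynomial.C) l j).natDegree = 0 := by
      simp [Matrix.map_apply]
    rw [h2, add_zero, Matrix.mul_apply]
    refine natDegree_sum_le_of_forall_le _ _ fun k _ => ?_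
    refine natDegree_mul_le.trans ?_
    have h3 : ((C.map Polynomial.C) i k).natDegree = 0 := by simp [Matrix.map_apply]
    rw [h3, zero_add]
    exact adjugate_charmatrix_entry_natDegree A k l
  · rw [Matrix.smul_apply, smul_eq_mul]
    refine natDegree_mul_le.trans ?_
    have : (A.charpoly).natDegree = n := by simp [Matrix.charpoly_natDegree_eq_dim]
    simp [this, Matrix.map_apply]

lemma detPmat_natDegree_le {n m : ℕ} (A : Matrix (Fin n) (Fin n) ℝ) (B : Matrix (Fin n) (Fin m) ℝ)
    (C : Matrix (Fin m) (Fin n) ℝ) (D : Matrix (Fin m) (Fin m) ℝ) :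
    (Pmat A B C D).det.natDegree ≤ m * n :=
  myNatDegree_det_le _ (Pmat_entry_natDegree A B C D)

lemma charmatrix_map_eval {n : ℕ} (A : Matrix (Fin n) (Fin n) ℝ) (z : ℝ) :
    (charmatrix A).map (Polynomial.eval z) = z • (1 : Matrix (Fin n) (Fin n) ℝ) - A := by
  ext i j
  by_cases h : i = j <;>
    simp [charmatrix_apply, Matrix.diagonal_apply, Matrix.one_apply, h]

lemma eval_charpoly {n : ℕ} (A : Matrix (Fin n) (Fin n) ℝ) (z : ℝ) :
    A.charpoly.eval z = (z • (1 : Matrix (Fin n) (Fin n) ℝ) - A).det := by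
  have := (Polynomial.evalRingHom z).map_det (charmatrix A)
  simp only [RingHom.mapMatrix_apply, coe_evalRingHom] at this
  rw [Matrix.charpoly, this, charmatrix_map_eval]

lemma Pmat_map_eval {n m : ℕ} (A : Matrix (Fin n) (Fin n) ℝ) (B : Matrix (Fin n) (Fin m) ℝ)
    (C : Matrix (Fin m) (Fin n) ℝ) (D : Matrix (Fin m) (Fin m) ℝ) (z : ℝ) :
    (Pmat A B C D).map (Polynomial.eval z) =
      C * (z • (1 : Matrix (Fin n) (Fin n) ℝ) - A).adjugate * B
        + (z • (1 : Matrix (Fin n) (Fin n) ℝ) - A).det • D := by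
  have hadj : ((charmatrix A).adjugate).map (Polynomial.eval z)
      = (z • (1 : Matrix (Fin n) (Fin n) ℝ) - A).adjugate := by
    have := (Polynomial.evalRingHom z).map_adjugate (charmatrix A)
    simp only [RingHom.mapMatrix_apply, coe_evalRingHom] at this
    rw [this, charmatrix_map_eval]
  ext i j
  simp only [Pmat, Matrix.map_apply, Matrix.add_apply, Matrix.smul_apply, smul_eq_mul,
    eval_add, eval_mul]
  congr 1
  · have : ((C.map Polynomial.C * (charmatrix A).adjugate * B.map Polynomial.C).map
        (Polynomial.eval z)) i j =
        (C * (z • (1 : Matrix (Fin n) (Fin n) ℝ) - A).adjugate * B) i j := by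
      rw [show Polynomial.eval z = ⇑(Polynomial.evalRingHom z) from rfl,
        Matrix.map_mul (f := Polynomial.evalRingHom z),
        Matrix.map_mul (f := Polynomial.evalRingHom z)]
      have h1 : (C.map Polynomial.C).map ⇑(Polynomial.evalRingHom z) = C := by
        ext a b; simp
      have h2 : (B.map Polynomial.C).map ⇑(Polynomial.evalRingHom z) = B := by
        ext a b; simp
      simp only [coe_evalRingHom] at h1 h2 ⊢
      rw [h1, h2, hadj]
    simpa [Matrix.map_apply] using this
  · rw [eval_charpoly]
    simp

lemma transpose_resolvent {n : ℕ} (A : Matrix (Fin n) (Fin n) ℝ) (w : ℝ) :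
    w • (1 : Matrix (Fin n) (Fin n) ℝ) - Aᵀ = (w • (1 : Matrix (Fin n) (Fin n) ℝ) - A)ᵀ := by
  rw [Matrix.transpose_sub, Matrix.transpose_smul, Matrix.transpose_one]

lemma adjugate_eq_det_smul_inv {k : ℕ} (M : Matrix (Fin k) (Fin k) ℝ) (h : IsUnit M.det) :
    M.adjugate = M.det • M⁻¹ := by
  rw [Matrix.inv_def, smul_smul, Ring.mul_inverse_cancel _ h, one_smul]

lemma Pmat_map_eval_of_isUnit {n m : ℕ} (A : Matrix (Fin n) (Fin n) ℝ)
    (B : Matrix (Fin n) (Fin m) ℝ) (C : Matrix (Fin m) (Fin n) ℝ)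
    (D : Matrix (Fin m) (Fin m) ℝ) (z : ℝ)
    (h : IsUnit (z • (1 : Matrix (Fin n) (Fin n) ℝ) - A)) :
    (Pmat A B C D).map (Polynomial.eval z) =
      (z • (1 : Matrix (Fin n) (Fin n) ℝ) - A).det •
        (C * (z • (1 : Matrix (Fin n) (Fin n) ℝ) - A)⁻¹ * B + D) := by
  rw [Pmat_map_eval, adjugate_eq_det_smul_inv _ ((Matrix.isUnit_iff_isUnit_det _).mp h),
    smul_add]
  congr 1
  rw [Matrix.mul_smul, Matrix.smul_mul]

lemma detPmat_ne_zero {n m : ℕ} (A : Matrix (Fin n) (Fin n) ℝ) (B : Matrix (Fin n) (Fin m) ℝ)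
    (C : Matrix (Fin m) (Fin n) ℝ) (D : Matrix (Fin m) (Fin m) ℝ)
    (hap : AllPass A B C D) : (Pmat A B C D).det ≠ 0 := by
  have hchar : A.charpoly ≠ 0 := (Matrix.charpoly_monic A).ne_zero
  have h1 : {z : ℝ | Polynomial.IsRoot A.charpoly z}.Finite :=
    Polynomial.finite_setOf_isRoot hchar
  have h2 : {z : ℝ | Polynomial.IsRoot A.charpoly z⁻¹}.Finite := by
    have he : {z : ℝ | Polynomial.IsRoot A.charpoly z⁻¹}
        = Inv.inv ⁻¹' {z : ℝ | Polynomial.IsRoot A.charpoly z} := rfl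
    rw [he]
    exact h1.preimage (inv_injective.injOn)
  have hfin : ({(0:ℝ)} ∪ ({z : ℝ | Polynomial.IsRoot A.charpoly z}
      ∪ {z : ℝ | Polynomial.IsRoot A.charpoly z⁻¹})).Finite :=
    (Set.finite_singleton _).union (h1.union h2)
  obtain ⟨z, hz⟩ := hfin.infinite_compl.nonempty
  simp only [Set.mem_compl_iff, Set.mem_union, Set.mem_singleton_iff, Set.mem_setOf_eq,
    not_or] at hz
  obtain ⟨hz0, hr1, hr2⟩ := hz
  have hd1 : (z • (1 : Matrix (Fin n) (Fin n) ℝ) - A).det ≠ 0 := by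
    rw [← eval_charpoly]; exact hr1
  have hd2 : (z⁻¹ • (1 : Matrix (Fin n) (Fin n) ℝ) - A).det ≠ 0 := by
    rw [← eval_charpoly]; exact hr2
  have hU1 : IsUnit (z • (1 : Matrix (Fin n) (Fin n) ℝ) - A) :=
    (Matrix.isUnit_iff_isUnit_det _).mpr (isUnit_iff_ne_zero.mpr hd1)
  have hU2 : IsUnit (z⁻¹ • (1 : Matrix (Fin n) (Fin n) ℝ) - Aᵀ) := by
    rw [transpose_resolvent]
    exact (Matrix.isUnit_iff_isUnit_det _).mpr
      (isUnit_iff_ne_zero.mpr (by rwa [Matrix.det_transpose]))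
  have hQ := hap z hz0 hU1 hU2
  have hdetQ : (C * (z • (1 : Matrix (Fin n) (Fin n) ℝ) - A)⁻¹ * B + D).det ≠ 0 := by
    have := congrArg Matrix.det hQ
    rw [Matrix.det_mul, Matrix.det_one] at this
    exact left_ne_zero_of_mul_eq_one this
  intro habs
  have : (Pmat A B C D).det.eval z = 0 := by rw [habs]; simp
  rw [show Polynomial.eval z = ⇑(Polynomial.evalRingHom z) from rfl,
    (Polynomial.evalRingHom z).map_det (Pmat A B C D)] at this
  simp only [RingHom.mapMatrix_apply, coe_evalRingHom] at this
  rw [Pmat_map_eval_of_isUnit A B C D z hU1, Matrix.det_smul] at this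
  simp only [Fintype.card_fin] at this
  exact (mul_ne_zero (pow_ne_zero _ hd1) hdetQ) this

lemma exists_U {m : ℕ} (D : Matrix (Fin m) (Fin m) ℝ) (hD : ¬ IsUnit D) :
    ∃ (p : ℕ) (U : Matrix (Fin m) (Fin m) ℝ), 0 < p ∧ p ≤ m ∧ U * Uᵀ = 1 ∧
      ∀ j : Fin m, ¬ ((j:ℕ) < m - p) → D *ᵥ (fun k => U j k) = 0 := by
  classical
  let e : EuclideanSpace ℝ (Fin m) ≃ₗ[ℝ] (Fin m → ℝ) := WithLp.linearEquiv 2 ℝ (Fin m → ℝ)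
  let K : Submodule ℝ (EuclideanSpace ℝ (Fin m)) :=
    LinearMap.ker (D.mulVecLin ∘ₗ e.toLinearMap)
  have hmemK : ∀ x : EuclideanSpace ℝ (Fin m), x ∈ K ↔ D *ᵥ (e x) = 0 := fun x => Iff.rfl
  have hdet : D.det = 0 := by
    by_contra h
    exact hD ((Matrix.isUnit_iff_isUnit_det D).mpr (isUnit_iff_ne_zero.mpr h))
  obtain ⟨v, hv0, hv⟩ := (Matrix.exists_mulVec_eq_zero_iff).mpr hdet
  set p := Module.finrank ℝ K with hp'
  set q := Module.finrank ℝ Kᗮ with hq'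
  have hpq : p + q = m := by
    rw [hp', hq', K.finrank_add_finrank_orthogonal]
    simp
  have hp : 0 < p := by
    rw [hp', Module.finrank_pos_iff_exists_ne_zero]
    refine ⟨⟨e.symm v, ?_⟩, ?_⟩
    · rw [hmemK]; simpa using hv
    · simp only [ne_eq, Submodule.mk_eq_zero]
      intro h
      exact hv0 (by simpa using congrArg e h)
  have hqm : m - p = q := by omega
  let b1 := stdOrthonormalBasis ℝ (Kᗮ : Submodule ℝ (EuclideanSpace ℝ (Fin m)))
  let b2 := stdOrthonormalBasis ℝ K
  let u : Fin m → EuclideanSpace ℝ (Fin m) := fun j =>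
    if h : (j:ℕ) < q then (b1 ⟨j, h⟩ : EuclideanSpace ℝ (Fin m))
    else (b2 ⟨(j:ℕ) - q, by have := j.isLt; omega⟩ : EuclideanSpace ℝ (Fin m))
  have humem : ∀ j : Fin m, ¬ ((j:ℕ) < q) → u j ∈ K := by
    intro j hj
    simp only [u, dif_neg hj]
    exact SetLike.coe_mem _
  have hu : Orthonormal ℝ u := by
    rw [orthonormal_iff_ite]
    intro i j
    by_cases hi : (i:ℕ) < q <;> by_cases hj : (j:ℕ) < q
    · simp only [u, dif_pos hi, dif_pos hj]
      rw [← Submodule.coe_inner, orthonormal_iff_ite.mp b1.orthonormal ⟨i, hi⟩ ⟨j, hj⟩]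
      by_cases h : i = j
      · subst h; simp
      · rw [if_neg h, if_neg ?_]
        simp only [Fin.mk.injEq]
        exact fun hh => h (Fin.ext hh)
    · rw [if_neg (by intro h; rw [h] at hi; exact hj hi)]
      simp only [u, dif_pos hi, dif_neg hj]
      exact Submodule.inner_left_of_mem_orthogonal (SetLike.coe_mem _) (SetLike.coe_mem _)
    · rw [if_neg (by intro h; rw [h] at hi; exact hi hj)]
      simp only [u, dif_neg hi, dif_pos hj]
      exact Submodule.inner_right_of_mem_orthogonal (SetLike.coe_mem _) (SetLike.coe_mem _)
    · simp only [u, dif_neg hi, dif_neg hj]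
      rw [← Submodule.coe_inner, orthonormal_iff_ite.mp b2.orthonormal _ _]
      by_cases h : i = j
      · subst h; simp
      · rw [if_neg h, if_neg ?_]
        simp only [Fin.mk.injEq]
        intro hh
        exact h (Fin.ext (by omega))
  refine ⟨p, Matrix.of (fun i j => e (u i) j), hp, by omega, ?_, ?_⟩
  · ext i j
    rw [Matrix.mul_apply, Matrix.one_apply]
    have := orthonormal_iff_ite.mp hu i j
    rw [PiLp.inner_apply] at this
    simp only [RCLike.inner_apply, conj_trivial] at this
    rw [← this]
    exact Finset.sum_congr rfl (fun x _ => mul_comm _ _)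
  · intro j hj
    rw [hqm] at hj
    have := (hmemK _).mp (humem j hj)
    convert this using 2
    rfl

lemma step {n m : ℕ} (A : Matrix (Fin n) (Fin n) ℝ) (B : Matrix (Fin n) (Fin m) ℝ)
    (C : Matrix (Fin m) (Fin n) ℝ) (D : Matrix (Fin m) (Fin m) ℝ)
    (hap : AllPass A B C D) (hD : ¬ IsUnit D) :
    ∃ (p : ℕ) (U : Matrix (Fin m) (Fin m) ℝ) (B₁ : Matrix (Fin n) (Fin m) ℝ)
      (D₁ : Matrix (Fin m) (Fin m) ℝ),
      0 < p ∧ p ≤ m ∧ Uᵀ * U = 1 ∧ AllPass A B₁ C D₁ ∧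
      (∀ z : ℝ, z ≠ 0 → IsUnit (z • (1 : Matrix (Fin n) (Fin n) ℝ) - A) →
        C * (z • (1 : Matrix (Fin n) (Fin n) ℝ) - A)⁻¹ * B + D =
          (C * (z • (1 : Matrix (Fin n) (Fin n) ℝ) - A)⁻¹ * B₁ + D₁) *
            (Matrix.diagonal (fun j : Fin m => if (j:ℕ) < m - p then (1:ℝ) else z⁻¹) * U)) ∧
      ((Pmat A B C D).det ≠ 0 →
        (Pmat A B₁ C D₁).det ≠ 0 ∧
          (Pmat A B C D).det.natDegree < (Pmat A B₁ C D₁).det.natDegree) := by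
  obtain ⟨p, U, hp, hpm, hUUt, hker⟩ := exists_U D hD
  have hUtU : Uᵀ * U = 1 := mul_eq_one_comm.mp hUUt
  set E : Matrix (Fin m) (Fin m) ℝ :=
    Matrix.diagonal (fun j => if (j:ℕ) < m - p then (1:ℝ) else 0) with hE
  set F : Matrix (Fin m) (Fin m) ℝ :=
    Matrix.diagonal (fun j => if (j:ℕ) < m - p then (0:ℝ) else 1) with hF
  set B₁ := B * Uᵀ * E + A * (B * Uᵀ) * F with hB₁
  set D₁ := D * Uᵀ * E + C * (B * Uᵀ) * F with hD₁
  have hDUF : D * (Uᵀ * F) = 0 := by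
    ext i j
    rw [← Matrix.mul_assoc, hF, Matrix.mul_diagonal]
    by_cases hj : (j:ℕ) < m - p
    · simp [hj]
    · have := congrFun (hker j hj) i
      simp only [if_neg hj, mul_one, Matrix.zero_apply]
      simpa [Matrix.mulVec, dotProduct, Matrix.mul_apply] using this
  have key : ∀ z : ℝ, IsUnit (z • (1 : Matrix (Fin n) (Fin n) ℝ) - A) →
      C * (z • (1 : Matrix (Fin n) (Fin n) ℝ) - A)⁻¹ * B₁ + D₁ =
        (C * (z • (1 : Matrix (Fin n) (Fin n) ℝ) - A)⁻¹ * B + D) * (Uᵀ * (E + z • F)) := by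
    intro z h
    have hdet := (Matrix.isUnit_iff_isUnit_det _).mp h
    set R := (z • (1 : Matrix (Fin n) (Fin n) ℝ) - A)⁻¹ with hR
    have e1 : (z • (1 : Matrix (Fin n) (Fin n) ℝ) - A) * (B * (Uᵀ * F)) + A * (B * (Uᵀ * F))
        = z • (B * (Uᵀ * F)) := by
      rw [Matrix.sub_mul, Matrix.smul_mul, Matrix.one_mul]; abel
    have hz : z • (C * (R * (B * (Uᵀ * F)))) =
        C * (B * (Uᵀ * F)) + C * (R * (A * (B * (Uᵀ * F)))) := by
      calc z • (C * (R * (B * (Uᵀ * F)))) = C * (R * (z • (B * (Uᵀ * F)))) := by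
            rw [Matrix.mul_smul, Matrix.mul_smul]
        _ = C * (R * ((z • (1:Matrix (Fin n) (Fin n) ℝ) - A) * (B * (Uᵀ * F))))
              + C * (R * (A * (B * (Uᵀ * F)))) := by
            rw [← e1, Matrix.mul_add, Matrix.mul_add]
        _ = C * (B * (Uᵀ * F)) + C * (R * (A * (B * (Uᵀ * F)))) := by
            rw [← Matrix.mul_assoc R, Matrix.nonsing_inv_mul _ hdet, Matrix.one_mul]
    simp only [hB₁, hD₁, Matrix.mul_add, Matrix.add_mul, Matrix.mul_smul, Matrix.mul_assoc]
    rw [smul_add, hDUF, smul_zero, add_zero, hz]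
    abel
  have hGdiag : ∀ w : ℝ, E + w • F =
      Matrix.diagonal (fun j : Fin m => if (j:ℕ) < m - p then (1:ℝ) else w) := by
    intro w
    ext i j
    rcases eq_or_ne i j with rfl | hij
    · by_cases hj : (i:ℕ) < m - p <;>
        simp [hE, hF, Matrix.add_apply, Matrix.smul_apply, Matrix.diagonal_apply_eq, hj]
    · simp [hE, hF, Matrix.add_apply, Matrix.smul_apply, Matrix.diagonal_apply_ne _ hij]
  have hGmul : ∀ z : ℝ, z ≠ 0 →
      (Matrix.diagonal (fun j : Fin m => if (j:ℕ) < m - p then (1:ℝ) else z)) *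
      (Matrix.diagonal (fun j : Fin m => if (j:ℕ) < m - p then (1:ℝ) else z⁻¹)) = 1 := by
    intro z hz0
    rw [Matrix.diagonal_mul_diagonal]
    have h1 : (fun i : Fin m => (if (i:ℕ) < m - p then (1:ℝ) else z) *
        if (i:ℕ) < m - p then (1:ℝ) else z⁻¹) = fun _ => (1:ℝ) := by
      funext j
      by_cases hj : (j:ℕ) < m - p <;> simp [hj, mul_inv_cancel₀ hz0]
    rw [h1, Matrix.diagonal_one]
  have hmid : ∀ z : ℝ, z ≠ 0 → (Uᵀ * (E + z • F)) *
      (Matrix.diagonal (fun j : Fin m => if (j:ℕ) < m - p then (1:ℝ) else z⁻¹) * U) = 1 := by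
    intro z hz0
    rw [hGdiag z, Matrix.mul_assoc, ← Matrix.mul_assoc (Matrix.diagonal _) (Matrix.diagonal _),
      hGmul z hz0, Matrix.one_mul, hUtU]
  have hfact : ∀ z : ℝ, z ≠ 0 → IsUnit (z • (1 : Matrix (Fin n) (Fin n) ℝ) - A) →
      C * (z • (1 : Matrix (Fin n) (Fin n) ℝ) - A)⁻¹ * B + D =
        (C * (z • (1 : Matrix (Fin n) (Fin n) ℝ) - A)⁻¹ * B₁ + D₁) *
          (Matrix.diagonal (fun j : Fin m => if (j:ℕ) < m - p then (1:ℝ) else z⁻¹) * U) := by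
    intro z hz0 h
    rw [key z h, Matrix.mul_assoc (C * (z • (1 : Matrix (Fin n) (Fin n) ℝ) - A)⁻¹ * B + D),
      hmid z hz0, Matrix.mul_one]
  have hap1 : AllPass A B₁ C D₁ := by
    intro z hz0 h1 h2
    have hz0' : z⁻¹ ≠ 0 := inv_ne_zero hz0
    have h2' : IsUnit (z⁻¹ • (1 : Matrix (Fin n) (Fin n) ℝ) - A) := by
      rw [transpose_resolvent] at h2
      rw [Matrix.isUnit_iff_isUnit_det] at h2 ⊢
      rwa [Matrix.det_transpose] at h2
    have trans1 : B₁ᵀ * (z⁻¹ • (1 : Matrix (Fin n) (Fin n) ℝ) - Aᵀ)⁻¹ * Cᵀ + D₁ᵀ =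
        (C * (z⁻¹ • (1 : Matrix (Fin n) (Fin n) ℝ) - A)⁻¹ * B₁ + D₁)ᵀ := by
      rw [transpose_resolvent, ← Matrix.transpose_nonsing_inv]
      simp [Matrix.transpose_mul, Matrix.mul_assoc]
    have trans0 : Bᵀ * (z⁻¹ • (1 : Matrix (Fin n) (Fin n) ℝ) - Aᵀ)⁻¹ * Cᵀ + Dᵀ =
        (C * (z⁻¹ • (1 : Matrix (Fin n) (Fin n) ℝ) - A)⁻¹ * B + D)ᵀ := by
      rw [transpose_resolvent, ← Matrix.transpose_nonsing_inv]
      simp [Matrix.transpose_mul, Matrix.mul_assoc]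
    rw [trans1, key z h1, key z⁻¹ h2', Matrix.transpose_mul]
    have hMT : (Uᵀ * (E + z⁻¹ • F))ᵀ =
        Matrix.diagonal (fun j : Fin m => if (j:ℕ) < m - p then (1:ℝ) else z⁻¹) * U := by
      rw [Matrix.transpose_mul, Matrix.transpose_transpose, hGdiag z⁻¹,
        Matrix.diagonal_transpose]
    rw [hMT, Matrix.mul_assoc, ← Matrix.mul_assoc (Uᵀ * (E + z • F)), hmid z hz0,
      Matrix.one_mul, ← trans0]
    exact hap z hz0 h1 h2
  have hpoly : Pmat A B₁ C D₁ = Pmat A B C D *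
      (Uᵀ.map Polynomial.C *
        Matrix.diagonal (fun j : Fin m => if (j:ℕ) < m - p then (1:ℝ[X]) else X)) := by
    have hadjmul : (charmatrix A).adjugate * charmatrix A =
        A.charpoly • (1 : Matrix (Fin n) (Fin n) ℝ[X]) := Matrix.adjugate_mul _
    have hCadd : ∀ a b : ℝ, Polynomial.C (a + b) = Polynomial.C a + Polynomial.C b := by
      intro a b; rw [map_add]
    have hGp : E.map Polynomial.C + (X:ℝ[X]) • F.map Polynomial.C =
        Matrix.diagonal (fun j : Fin m => if (j:ℕ) < m - p then (1:ℝ[X]) else X) := by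
      ext i j
      rcases eq_or_ne i j with rfl | hij
      · by_cases hj : (i:ℕ) < m - p <;>
          simp [hE, hF, Matrix.add_apply, Matrix.smul_apply, Matrix.map_apply,
            Matrix.diagonal_apply_eq, hj]
      · simp [hE, hF, Matrix.add_apply, Matrix.smul_apply, Matrix.map_apply,
          Matrix.diagonal_apply_ne _ hij]
    have hDUFp : D.map Polynomial.C * (Uᵀ.map Polynomial.C * F.map Polynomial.C) = 0 := by
      have h0 : (D * (Uᵀ * F)).map Polynomial.C =
          (0 : Matrix (Fin m) (Fin m) ℝ).map Polynomial.C := by rw [hDUF]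
      rw [Matrix.map_mul (f := Polynomial.C), Matrix.map_mul (f := Polynomial.C)] at h0
      simpa using h0
    have hB₁p : B₁.map Polynomial.C = B.map Polynomial.C * Uᵀ.map Polynomial.C *
        E.map Polynomial.C + A.map Polynomial.C *
          (B.map Polynomial.C * Uᵀ.map Polynomial.C) * F.map Polynomial.C := by
      rw [hB₁, Matrix.map_add _ hCadd]
      rw [Matrix.map_mul (f := Polynomial.C), Matrix.map_mul (f := Polynomial.C),
        Matrix.map_mul (f := Polynomial.C), Matrix.map_mul (f := Polynomial.C),
        Matrix.map_mul (f := Polynomial.C)]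
    have hD₁p : D₁.map Polynomial.C = D.map Polynomial.C * Uᵀ.map Polynomial.C *
        E.map Polynomial.C + C.map Polynomial.C *
          (B.map Polynomial.C * Uᵀ.map Polynomial.C) * F.map Polynomial.C := by
      rw [hD₁, Matrix.map_add _ hCadd]
      rw [Matrix.map_mul (f := Polynomial.C), Matrix.map_mul (f := Polynomial.C),
        Matrix.map_mul (f := Polynomial.C), Matrix.map_mul (f := Polynomial.C),
        Matrix.map_mul (f := Polynomial.C)]
    have e1 : charmatrix A * (B.map Polynomial.C * (Uᵀ.map Polynomial.C * F.map Polynomial.C))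
        + A.map Polynomial.C *
          (B.map Polynomial.C * (Uᵀ.map Polynomial.C * F.map Polynomial.C)) =
        (X:ℝ[X]) • (B.map Polynomial.C * (Uᵀ.map Polynomial.C * F.map Polynomial.C)) := by
      rw [charmatrix, Matrix.sub_mul, Matrix.scalar_apply, ← Matrix.smul_eq_diagonal_mul,
        RingHom.mapMatrix_apply]
      abel
    have hzP : (X:ℝ[X]) • (C.map Polynomial.C * ((charmatrix A).adjugate *
          (B.map Polynomial.C * (Uᵀ.map Polynomial.C * F.map Polynomial.C)))) =
        A.charpoly • (C.map Polynomial.C *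
            (B.map Polynomial.C * (Uᵀ.map Polynomial.C * F.map Polynomial.C)))
          + C.map Polynomial.C * ((charmatrix A).adjugate * (A.map Polynomial.C *
            (B.map Polynomial.C * (Uᵀ.map Polynomial.C * F.map Polynomial.C)))) := by
      calc (X:ℝ[X]) • (C.map Polynomial.C * ((charmatrix A).adjugate *
          (B.map Polynomial.C * (Uᵀ.map Polynomial.C * F.map Polynomial.C))))
          = C.map Polynomial.C * ((charmatrix A).adjugate * ((X:ℝ[X]) •
            (B.map Polynomial.C * (Uᵀ.map Polynomial.C * F.map Polynomial.C)))) := by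
            rw [Matrix.mul_smul, Matrix.mul_smul]
        _ = C.map Polynomial.C * ((charmatrix A).adjugate * (charmatrix A *
              (B.map Polynomial.C * (Uᵀ.map Polynomial.C * F.map Polynomial.C))))
            + C.map Polynomial.C * ((charmatrix A).adjugate * (A.map Polynomial.C *
              (B.map Polynomial.C * (Uᵀ.map Polynomial.C * F.map Polynomial.C)))) := by
            rw [← e1, Matrix.mul_add, Matrix.mul_add]
        _ = _ := by
            rw [← Matrix.mul_assoc ((charmatrix A).adjugate), hadjmul, Matrix.smul_mul,
              Matrix.one_mul, Matrix.mul_smul]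
    unfold Pmat
    rw [hB₁p, hD₁p, ← hGp]
    simp only [Matrix.mul_add, Matrix.add_mul, Matrix.mul_smul, Matrix.smul_mul,
      Matrix.mul_assoc]
    rw [smul_add, hDUFp, smul_zero, add_zero, hzP]
    abel
  have hdetconseq : (Pmat A B C D).det ≠ 0 →
      (Pmat A B₁ C D₁).det ≠ 0 ∧
        (Pmat A B C D).det.natDegree < (Pmat A B₁ C D₁).det.natDegree := by
    intro hP
    have hdetU : Uᵀ.det ≠ 0 := by
      have h0 := congrArg Matrix.det hUtU
      rw [Matrix.det_mul, Matrix.det_one] at h0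
      exact left_ne_zero_of_mul_eq_one h0
    have hdetUp : (Uᵀ.map Polynomial.C).det = Polynomial.C Uᵀ.det := by
      have := (Polynomial.C : ℝ →+* ℝ[X]).map_det Uᵀ
      simp only [RingHom.mapMatrix_apply] at this
      exact this.symm
    have hmonic : ∀ j : Fin m, (if (j:ℕ) < m - p then (1:ℝ[X]) else X).Monic := by
      intro j
      by_cases hj : (j:ℕ) < m - p <;> simp [hj, Polynomial.monic_one, Polynomial.monic_X]
    have hGne : (∏ j : Fin m, (if (j:ℕ) < m - p then (1:ℝ[X]) else X)) ≠ 0 :=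
      (Polynomial.monic_prod_of_monic _ _ (fun j _ => hmonic j)).ne_zero
    have hm1 : 0 < m := lt_of_lt_of_le hp hpm
    have hGdeg : 1 ≤ (∏ j : Fin m, (if (j:ℕ) < m - p then (1:ℝ[X]) else X)).natDegree := by
      rw [Polynomial.natDegree_prod _ _ (fun j _ => (hmonic j).ne_zero)]
      have hj0 : ¬ (((⟨m-1, by omega⟩ : Fin m)) : ℕ) < m - p := by
        simp only [not_lt]
        omega
      calc 1 = (if (((⟨m-1, by omega⟩ : Fin m)) : ℕ) < m - p then (1:ℝ[X]) else X).natDegree := by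
            rw [if_neg hj0, Polynomial.natDegree_X]
        _ ≤ _ := Finset.single_le_sum
            (f := fun j : Fin m => (if (j:ℕ) < m - p then (1:ℝ[X]) else X).natDegree)
            (fun _ _ => Nat.zero_le _) (Finset.mem_univ (⟨m-1, by omega⟩ : Fin m))
    have hdetG : (Matrix.diagonal
        (fun j : Fin m => if (j:ℕ) < m - p then (1:ℝ[X]) else X)).det =
        ∏ j : Fin m, (if (j:ℕ) < m - p then (1:ℝ[X]) else X) := Matrix.det_diagonal
    have hCne : (Polynomial.C Uᵀ.det) ≠ 0 := by
      simpa using hdetU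
    constructor
    · rw [hpoly, Matrix.det_mul, Matrix.det_mul, hdetUp, hdetG]
      exact mul_ne_zero hP (mul_ne_zero hCne hGne)
    · rw [hpoly, Matrix.det_mul, Matrix.det_mul, hdetUp, hdetG,
        Polynomial.natDegree_mul hP (mul_ne_zero hCne hGne),
        Polynomial.natDegree_mul hCne hGne, Polynomial.natDegree_C, zero_add]
      omega
  exact ⟨p, U, B₁, D₁, hp, hpm, hUtU, hap1, hfact, hdetconseq⟩

lemma recMain {n m : ℕ} (A : Matrix (Fin n) (Fin n) ℝ) (C : Matrix (Fin m) (Fin n) ℝ) :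
    ∀ (d : ℕ) (B : Matrix (Fin n) (Fin m) ℝ) (D : Matrix (Fin m) (Fin m) ℝ),
      AllPass A B C D → (Pmat A B C D).det ≠ 0 →
      m * n ≤ d + (Pmat A B C D).det.natDegree →
      ∃ (k : ℕ) (p : Fin k → ℕ), (∀ i, 0 < p i ∧ p i ≤ m) ∧
      ∃ U : Fin k → Matrix (Fin m) (Fin m) ℝ, (∀ i, (U i)ᵀ * U i = 1) ∧
      ∃ (B' : Matrix (Fin n) (Fin m) ℝ) (D' : Matrix (Fin m) (Fin m) ℝ),
        IsUnit D' ∧ AllPass A B' C D' ∧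
        ∀ z : ℝ, z ≠ 0 → IsUnit (z • (1 : Matrix (Fin n) (Fin n) ℝ) - A) →
          C * (z • (1 : Matrix (Fin n) (Fin n) ℝ) - A)⁻¹ * B + D =
            (C * (z • (1 : Matrix (Fin n) (Fin n) ℝ) - A)⁻¹ * B' + D') *
            (List.ofFn (fun i : Fin k =>
              Matrix.diagonal (fun j : Fin m => if (j : ℕ) < m - p i then (1 : ℝ) else z⁻¹)
                * U i)).prod := by
  intro d
  induction d with
  | zero =>
    intro B D hap hP hle
    by_cases hD : IsUnit D
    · exact ⟨0, Fin.elim0, fun i => i.elim0, Fin.elim0, fun i => i.elim0, B, D, hD, hap,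
        fun z hz0 h => by simp⟩
    · exfalso
      obtain ⟨p, U, B₁, D₁, _, _, _, _, _, hdc⟩ := step A B C D hap hD
      obtain ⟨hP1, hlt⟩ := hdc hP
      have hb := detPmat_natDegree_le A B₁ C D₁
      omega
  | succ d ih =>
    intro B D hap hP hle
    by_cases hD : IsUnit D
    · exact ⟨0, Fin.elim0, fun i => i.elim0, Fin.elim0, fun i => i.elim0, B, D, hD, hap,
        fun z hz0 h => by simp⟩
    · obtain ⟨p, U, B₁, D₁, hp0, hpm, hUtU, hap1, hfact, hdc⟩ := step A B C D hap hD
      obtain ⟨hP1, hlt⟩ := hdc hP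
      have hb := detPmat_natDegree_le A B₁ C D₁
      have hle1 : m * n ≤ d + (Pmat A B₁ C D₁).det.natDegree := by omega
      obtain ⟨k, p', hp', U', hU', B', D', hD', hap', hfact'⟩ := ih B₁ D₁ hap1 hP1 hle1
      refine ⟨k+1, Fin.snoc p' p, ?_, Fin.snoc U' U, ?_, B', D', hD', hap', ?_⟩
      · intro i
        refine Fin.lastCases ?_ ?_ i
        · rw [Fin.snoc_last]
          exact ⟨hp0, hpm⟩
        · intro j
          rw [Fin.snoc_castSucc]
          exact hp' j
      · intro i
        refine Fin.lastCases ?_ ?_ i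
        · rw [Fin.snoc_last]
          exact hUtU
        · intro j
          rw [Fin.snoc_castSucc]
          exact hU' j
      · intro z hz0 h
        rw [hfact z hz0 h, hfact' z hz0 h, List.ofFn_succ', List.prod_concat]
        have hlast : (Fin.snoc p' p : Fin (k+1) → ℕ) (Fin.last k) = p := Fin.snoc_last _ _
        have hlastU : (Fin.snoc U' U : Fin (k+1) → Matrix (Fin m) (Fin m) ℝ) (Fin.last k) = U :=
          Fin.snoc_last _ _
        have hcast : (fun i : Fin k => Matrix.diagonal (fun j : Fin m =>
            if (j:ℕ) < m - (Fin.snoc p' p : Fin (k+1) → ℕ) i.castSucc then (1:ℝ) else z⁻¹)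
              * (Fin.snoc U' U : Fin (k+1) → Matrix (Fin m) (Fin m) ℝ) i.castSucc)
            = (fun i : Fin k => Matrix.diagonal (fun j : Fin m =>
            if (j:ℕ) < m - p' i then (1:ℝ) else z⁻¹) * U' i) := by
          funext i
          rw [Fin.snoc_castSucc, Fin.snoc_castSucc]
        rw [hlast, hlastU, hcast, Matrix.mul_assoc]


theorem allpass_extract_biproper_factor
    (n m : ℕ) (A : Matrix (Fin n) (Fin n) ℝ) (B : Matrix (Fin n) (Fin m) ℝ)
    (C : Matrix (Fin m) (Fin n) ℝ) (D : Matrix (Fin m) (Fin m) ℝ)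
    (hap : AllPass A B C D) :
    ∃ (k : ℕ) (p : Fin k → ℕ), (∀ i, 0 < p i ∧ p i ≤ m) ∧
    ∃ U : Fin k → Matrix (Fin m) (Fin m) ℝ, (∀ i, (U i)ᵀ * U i = 1) ∧
    ∃ (B' : Matrix (Fin n) (Fin m) ℝ) (D' : Matrix (Fin m) (Fin m) ℝ),
      IsUnit D' ∧ AllPass A B' C D' ∧
      ∀ z : ℝ, z ≠ 0 → IsUnit (z • (1 : Matrix (Fin n) (Fin n) ℝ) - A) →
        C * (z • (1 : Matrix (Fin n) (Fin n) ℝ) - A)⁻¹ * B + D =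
          (C * (z • (1 : Matrix (Fin n) (Fin n) ℝ) - A)⁻¹ * B' + D') *
          (List.ofFn (fun i : Fin k =>
            Matrix.diagonal (fun j : Fin m => if (j : ℕ) < m - p i then (1 : ℝ) else z⁻¹)
              * U i)).prod := by
  exact recMain A C (m * n) B D hap (detPmat_ne_zero A B C D hap) (Nat.le_add_right _ _)
end
end

section
/- Let A ∈ ℝ^{n×n}, and let B = [B₁ | B₂] ∈ ℝ^{n×m} with B₁ ∈ ℝ^{n×(m−p)} and B₂ ∈ ℝ^{n×p}, such that the pair (A, B) is reachable. Let U ∈ ℝ^{m×m} be orthogonal. Define Ā := [[0_{p×p}, 0],[B₂, A]] ∈ ℝ^{(p+n)×(p+n)} and B̄ := [[0_{p×(m−p)}, I_p],[B₁, 0_{n×p}]]·U ∈ ℝ^{(p+n)×m}. Then the pair (Ā, B̄) is reachable. -/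
open Matrix

noncomputable section

/-- Reachability is preserved by right-multiplication of `B` by an orthogonal matrix. -/
lemma reachable_mul_orth {N M : Type*} [Fintype N] [DecidableEq N] [Fintype M] [DecidableEq M]
    (A : Matrix N N ℝ) (B : Matrix N M ℝ) (U : Matrix M M ℝ) (hU : Uᵀ * U = 1)
    (h : Reachable A B) : Reachable A (B * U) := by
  have hUU : U * Uᵀ = 1 := mul_eq_one_comm.mp hU
  rw [Reachable] at h ⊢
  rw [eq_top_iff, ← h]
  apply Submodule.span_le.mpr
  rintro v ⟨k, hk, j, rfl⟩
  have hB : (fun y => B y j) = ∑ i : M, Uᵀ i j • (fun y => (B * U) y i) := by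
    funext y
    have hBU : B = (B * U) * Uᵀ := by rw [Matrix.mul_assoc, hUU, Matrix.mul_one]
    conv_lhs => rw [hBU]
    simp [Matrix.mul_apply, Finset.sum_apply, mul_comm]
  have key : (A ^ k) *ᵥ (fun y => B y j)
      = ∑ i : M, Uᵀ i j • ((A ^ k) *ᵥ (fun y => (B * U) y i)) := by
    rw [hB, ← Matrix.mulVecLin_apply, map_sum]
    refine Finset.sum_congr rfl fun i _ => ?_
    rw [LinearMap.map_smul, Matrix.mulVecLin_apply]
  rw [key]
  exact Submodule.sum_mem _ fun i _ =>
    Submodule.smul_mem _ _ (Submodule.subset_span ⟨k, hk, i, rfl⟩)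

theorem extended_pair_reachable
    (n m₁ m₂ : ℕ) (A : Matrix (Fin n) (Fin n) ℝ)
    (B₁ : Matrix (Fin n) (Fin m₁) ℝ) (B₂ : Matrix (Fin n) (Fin m₂) ℝ)
    (hreach : Reachable A (Matrix.fromCols B₁ B₂))
    (U : Matrix (Fin m₁ ⊕ Fin m₂) (Fin m₁ ⊕ Fin m₂) ℝ) (hU : Uᵀ * U = 1) :
    Reachable
      (Matrix.fromBlocks (0 : Matrix (Fin m₂) (Fin m₂) ℝ) 0 B₂ A)
      (Matrix.fromBlocks (0 : Matrix (Fin m₂) (Fin m₁) ℝ) 1 B₁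
        (0 : Matrix (Fin n) (Fin m₂) ℝ) * U) := by
  set Ab : Matrix (Fin m₂ ⊕ Fin n) (Fin m₂ ⊕ Fin n) ℝ :=
    Matrix.fromBlocks (0 : Matrix (Fin m₂) (Fin m₂) ℝ) 0 B₂ A with hAb
  set Bb : Matrix (Fin m₂ ⊕ Fin n) (Fin m₁ ⊕ Fin m₂) ℝ :=
    Matrix.fromBlocks (0 : Matrix (Fin m₂) (Fin m₁) ℝ) 1 B₁
      (0 : Matrix (Fin n) (Fin m₂) ℝ) with hBb
  apply reachable_mul_orth _ _ _ hU
  -- key computation: the action of powers of `Ab` on vectors supported on the second block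
  have pow_elim : ∀ (k : ℕ) (y : Fin n → ℝ),
      (Ab ^ k) *ᵥ Sum.elim (0 : Fin m₂ → ℝ) y
        = Sum.elim (0 : Fin m₂ → ℝ) ((A ^ k) *ᵥ y) := by
    intro k
    induction k with
    | zero => intro y; simp
    | succ k ih =>
      intro y
      have h1 : Ab *ᵥ Sum.elim (0 : Fin m₂ → ℝ) y = Sum.elim (0 : Fin m₂ → ℝ) (A *ᵥ y) := by
        rw [hAb, Matrix.fromBlocks_mulVec]
        simp only [Sum.elim_comp_inl, Sum.elim_comp_inr]
        simp
      rw [pow_succ, ← Matrix.mulVec_mulVec, h1, ih, Matrix.mulVec_mulVec, ← pow_succ]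
  rw [Reachable, eq_top_iff]
  set S : Set ((Fin m₂ ⊕ Fin n) → ℝ) :=
    {v | ∃ k < Fintype.card (Fin m₂ ⊕ Fin n), ∃ j, v = (Ab ^ k) *ᵥ (fun i => Bb i j)} with hS
  have hcard : Fintype.card (Fin m₂ ⊕ Fin n) = m₂ + n := by simp
  -- the "identity block" columns
  have hA : ∀ j : Fin m₂,
      Sum.elim (Pi.single j 1) (0 : Fin n → ℝ) ∈ Submodule.span ℝ S := by
    intro j
    apply Submodule.subset_span
    refine ⟨0, by have := j.pos; omega, Sum.inr j, ?_⟩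
    funext i
    cases i with
    | inl i => simp [hBb, Matrix.one_apply, Pi.single_apply]
    | inr i => simp [hBb]
  -- the vectors coming from the original reachability
  have hT : ∀ y : Fin n → ℝ,
      Sum.elim (0 : Fin m₂ → ℝ) y ∈ Submodule.span ℝ S := by
    intro y
    have hy : y ∈ Submodule.span ℝ
        {v : Fin n → ℝ | ∃ k < Fintype.card (Fin n), ∃ j,
          v = (A ^ k) *ᵥ (fun i => Matrix.fromCols B₁ B₂ i j)} := by
      rw [hreach]; trivial
    induction hy using Submodule.span_induction with
    | mem v hv =>
      obtain ⟨k, hk, j, rfl⟩ := hv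
      rw [Fintype.card_fin] at hk
      cases j with
      | inl j₁ =>
        apply Submodule.subset_span
        refine ⟨k, by omega, Sum.inl j₁, ?_⟩
        have hcol : (fun i => Bb i (Sum.inl j₁))
            = Sum.elim (0 : Fin m₂ → ℝ) (fun i => B₁ i j₁) := by
          funext i; cases i <;> simp [hBb]
        have hc2 : (fun i => Matrix.fromCols B₁ B₂ i (Sum.inl j₁)) = fun i => B₁ i j₁ := by
          funext i; simp
        rw [hcol, pow_elim, hc2]
      | inr j₂ =>
        apply Submodule.subset_span
        refine ⟨k + 1, by have := j₂.pos; omega, Sum.inr j₂, ?_⟩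
        have hcol : (fun i => Bb i (Sum.inr j₂))
            = Sum.elim (Pi.single j₂ 1) (0 : Fin n → ℝ) := by
          funext i
          cases i with
          | inl i => simp [hBb, Matrix.one_apply, Pi.single_apply]
          | inr i => simp [hBb]
        have h1 : Ab *ᵥ Sum.elim (Pi.single j₂ 1) (0 : Fin n → ℝ)
            = Sum.elim (0 : Fin m₂ → ℝ) (fun i => B₂ i j₂) := by
          rw [hAb, Matrix.fromBlocks_mulVec]
          simp only [Sum.elim_comp_inl, Sum.elim_comp_inr]
          simp
          rfl
        have hc2 : (fun i => Matrix.fromCols B₁ B₂ i (Sum.inr j₂)) = fun i => B₂ i j₂ := by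
          funext i; simp
        rw [hcol, pow_succ, ← Matrix.mulVec_mulVec, h1, pow_elim, hc2]
    | zero =>
      have h0 : Sum.elim (0 : Fin m₂ → ℝ) (0 : Fin n → ℝ) = 0 := by
        funext i; cases i <;> rfl
      rw [h0]; exact Submodule.zero_mem _
    | add y₁ y₂ _ _ h₁ h₂ =>
      have hadd : Sum.elim (0 : Fin m₂ → ℝ) (y₁ + y₂)
          = Sum.elim (0 : Fin m₂ → ℝ) y₁ + Sum.elim (0 : Fin m₂ → ℝ) y₂ := by
        funext i; cases i <;> simp
      rw [hadd]; exact Submodule.add_mem _ h₁ h₂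
    | smul c y₁ _ h₁ =>
      have hsmul : Sum.elim (0 : Fin m₂ → ℝ) (c • y₁)
          = c • Sum.elim (0 : Fin m₂ → ℝ) y₁ := by
        funext i; cases i <;> simp
      rw [hsmul]; exact Submodule.smul_mem _ _ h₁
  -- combine
  intro w _
  have hw : w = (∑ j : Fin m₂, w (Sum.inl j) • Sum.elim (Pi.single j 1) (0 : Fin n → ℝ))
      + Sum.elim (0 : Fin m₂ → ℝ) (fun i => w (Sum.inr i)) := by
    funext i
    cases i with
    | inl i => simp [Pi.single_apply]
    | inr i => simp
  rw [hw]
  exact Submodule.add_mem _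
    (Submodule.sum_mem _ fun j _ => Submodule.smul_mem _ _ (hA j)) (hT _)
end
end

section
/- Let A ∈ ℝ^{n×n}, B ∈ ℝ^{n×m}, C ∈ ℝ^{m×n}, D ∈ ℝ^{m×m} with A and D invertible, (A,B) reachable, (A,C) observable, and Q(z) = C(zI−A)⁻¹B + D all-pass. Let T ∈ ℝ^{n×n} be an invertible matrix satisfying T⁻¹A⁻ᵀT = A − BD⁻¹C, T⁻¹A⁻ᵀCᵀ = BD⁻¹, BᵀA⁻ᵀT = D⁻¹C, and D⁻¹ = Dᵀ − BᵀA⁻ᵀCᵀ. Then T is symmetric: T = Tᵀ. -/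
open Matrix

noncomputable section

theorem T_is_symmetric
    (n m : ℕ) (A : Matrix (Fin n) (Fin n) ℝ) (B : Matrix (Fin n) (Fin m) ℝ)
    (C : Matrix (Fin m) (Fin n) ℝ) (D : Matrix (Fin m) (Fin m) ℝ)
    (hA : IsUnit A) (hD : IsUnit D)
    (hreach : Reachable A B) (hobs : Observable A C) (hap : AllPass A B C D)
    (T : Matrix (Fin n) (Fin n) ℝ) (hT : IsUnit T)
    (h1 : T⁻¹ * Aᵀ⁻¹ * T = A - B * D⁻¹ * C)
    (h2 : T⁻¹ * Aᵀ⁻¹ * Cᵀ = B * D⁻¹)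
    (h3 : Bᵀ * Aᵀ⁻¹ * T = D⁻¹ * C)
    (h4 : D⁻¹ = Dᵀ - Bᵀ * Aᵀ⁻¹ * Cᵀ) :
    T = Tᵀ := by
  -- invertibility bookkeeping
  have hAd : IsUnit A.det := (Matrix.isUnit_iff_isUnit_det A).mp hA
  have hAtd : IsUnit Aᵀ.det := by rwa [Matrix.det_transpose]
  have hDd : IsUnit D.det := (Matrix.isUnit_iff_isUnit_det D).mp hD
  have hDtd : IsUnit Dᵀ.det := by rwa [Matrix.det_transpose]
  have hTd : IsUnit T.det := (Matrix.isUnit_iff_isUnit_det T).mp hT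
  haveI : Invertible A := A.invertibleOfIsUnitDet hAd
  haveI : Invertible Aᵀ := Aᵀ.invertibleOfIsUnitDet hAtd
  haveI : Invertible D := D.invertibleOfIsUnitDet hDd
  haveI : Invertible Dᵀ := Dᵀ.invertibleOfIsUnitDet hDtd
  haveI : Invertible T := T.invertibleOfIsUnitDet hTd
  have hAA : A * A⁻¹ = 1 := Matrix.mul_nonsing_inv A hAd
  have hA'A : A⁻¹ * A = 1 := Matrix.nonsing_inv_mul A hAd
  have hAtA : Aᵀ * Aᵀ⁻¹ = 1 := Matrix.mul_nonsing_inv _ hAtd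
  have hAt'A : Aᵀ⁻¹ * Aᵀ = 1 := Matrix.nonsing_inv_mul _ hAtd
  have hDD : D * D⁻¹ = 1 := Matrix.mul_nonsing_inv D hDd
  have hD'D : D⁻¹ * D = 1 := Matrix.nonsing_inv_mul D hDd
  have hDtD : Dᵀ * Dᵀ⁻¹ = 1 := Matrix.mul_nonsing_inv _ hDtd
  have hDt'D : Dᵀ⁻¹ * Dᵀ = 1 := Matrix.nonsing_inv_mul _ hDtd
  have hTT : T * T⁻¹ = 1 := Matrix.mul_nonsing_inv T hTd
  have hT'T : T⁻¹ * T = 1 := Matrix.nonsing_inv_mul T hTd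
  -- step 1 : T*B = Aᵀ⁻¹ * (Cᵀ * D)
  have eTB : T * B = Aᵀ⁻¹ * (Cᵀ * D) := by
    have h := congrArg (fun X => T * (X * D)) h2
    simp only [Matrix.mul_assoc, Matrix.mul_inv_cancel_left_of_invertible,
      Matrix.inv_mul_cancel_left_of_invertible, hDD, hD'D, Matrix.mul_one] at h
    exact h.symm
  -- step 2 : T*A = Aᵀ⁻¹*T + Aᵀ⁻¹*(Cᵀ*C)
  have eTA : T * A = Aᵀ⁻¹ * T + Aᵀ⁻¹ * (Cᵀ * C) := by
    have h := congrArg (fun X => T * X) h1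
    simp only [Matrix.mul_sub] at h
    rw [show T * (B * D⁻¹ * C) = T * B * (D⁻¹ * C) by
      simp only [Matrix.mul_assoc], eTB] at h
    simp only [Matrix.mul_assoc, Matrix.mul_inv_cancel_left_of_invertible,
      Matrix.inv_mul_cancel_left_of_invertible] at h
    -- h : Aᵀ⁻¹ * T = T * A - Aᵀ⁻¹ * (Cᵀ * C)
    rw [h]; abel
  -- step 3 (transpose of step 2) : Aᵀ*Tᵀ = Tᵀ*A⁻¹ + Cᵀ*(C*A⁻¹)
  have et : Aᵀ * Tᵀ = Tᵀ * A⁻¹ + Cᵀ * (C * A⁻¹) := by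
    have h := congrArg Matrix.transpose eTA
    simpa [Matrix.transpose_mul, Matrix.transpose_add, Matrix.transpose_nonsing_inv,
      Matrix.mul_assoc] using h
  -- step 4 : Tᵀ*A = Aᵀ⁻¹*Tᵀ + Aᵀ⁻¹*(Cᵀ*C)
  have eTtA : Tᵀ * A = Aᵀ⁻¹ * Tᵀ + Aᵀ⁻¹ * (Cᵀ * C) := by
    have h := congrArg (fun X => Aᵀ⁻¹ * (X * A)) et
    simp only [Matrix.add_mul, Matrix.mul_add, Matrix.mul_assoc, hA'A, Matrix.mul_one,
      Matrix.inv_mul_cancel_left_of_invertible] at h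
    rw [h]
  -- step 5 : transpose of h3 : Tᵀ * (A⁻¹ * B) = Cᵀ * Dᵀ⁻¹
  have e3t : Tᵀ * (A⁻¹ * B) = Cᵀ * Dᵀ⁻¹ := by
    have h := congrArg Matrix.transpose h3
    simpa [Matrix.transpose_mul, Matrix.transpose_nonsing_inv, Matrix.mul_assoc] using h
  -- step 6 : transpose of h4 : Dᵀ⁻¹ = D - C * (A⁻¹ * B)
  have e4t : Dᵀ⁻¹ = D - C * (A⁻¹ * B) := by
    have h := congrArg Matrix.transpose h4
    simpa [Matrix.transpose_sub, Matrix.transpose_mul, Matrix.transpose_nonsing_inv,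
      Matrix.mul_assoc] using h
  -- step 7 : Tᵀ*B = Aᵀ⁻¹*(Cᵀ*D)
  have eTtB : Tᵀ * B = Aᵀ⁻¹ * (Cᵀ * D) := by
    have key : Aᵀ * (Tᵀ * B) = Cᵀ * D := by
      have h := congrArg (fun X => X * B) et
      simp only [Matrix.add_mul, Matrix.mul_assoc] at h
      rw [e3t, e4t, Matrix.mul_sub] at h
      rw [h]; abel
    have h := congrArg (fun X => Aᵀ⁻¹ * X) key
    simp only [Matrix.inv_mul_cancel_left_of_invertible] at h
    exact h
  -- the difference K
  have hKB : (Tᵀ - T) * B = 0 := by rw [Matrix.sub_mul, eTB, eTtB, sub_self]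
  have hKA : (Tᵀ - T) * A = Aᵀ⁻¹ * (Tᵀ - T) := by
    rw [Matrix.sub_mul, eTA, eTtA, Matrix.mul_sub]; abel
  have hKpow : ∀ k : ℕ, (Tᵀ - T) * A ^ k = (Aᵀ⁻¹) ^ k * (Tᵀ - T) := by
    intro k
    induction k with
    | zero => simp
    | succ k ih =>
      rw [pow_succ, pow_succ, ← Matrix.mul_assoc, ih, Matrix.mul_assoc, hKA,
        ← Matrix.mul_assoc]
  -- K kills every generator of the reachability span
  have hgen : ∀ v ∈ {v : Fin n → ℝ | ∃ k < Fintype.card (Fin n), ∃ j : Fin m,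
      v = (A ^ k) *ᵥ (fun i => B i j)}, (Tᵀ - T) *ᵥ v = 0 := by
    rintro v ⟨k, -, j, rfl⟩
    have hcol : (fun i => B i j) = B *ᵥ Pi.single j 1 := by
      funext i; simp [Matrix.mulVec_single]
    rw [hcol, Matrix.mulVec_mulVec, Matrix.mulVec_mulVec, hKpow, Matrix.mul_assoc,
      hKB, Matrix.mul_zero, Matrix.zero_mulVec]
  -- conclude K = 0 via reachability
  have hKv : ∀ v : Fin n → ℝ, (Tᵀ - T) *ᵥ v = 0 := by
    intro v
    have hle : Submodule.span ℝ {v : Fin n → ℝ | ∃ k < Fintype.card (Fin n), ∃ j : Fin m,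
        v = (A ^ k) *ᵥ (fun i => B i j)} ≤ LinearMap.ker (Tᵀ - T).mulVecLin := by
      rw [Submodule.span_le]
      intro w hw
      exact LinearMap.mem_ker.mpr (hgen w hw)
    rw [hreach] at hle
    exact LinearMap.mem_ker.mp (hle Submodule.mem_top)
  have hK0 : Tᵀ - T = 0 := by
    ext i j
    have h := congrFun (hKv (Pi.single j 1)) i
    simpa [Matrix.mulVec_single] using h
  have := sub_eq_zero.mp hK0
  exact this.symm
end
end
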